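/- arXiv:2012.13732 — 2 statements merged into one kernel-verified Lean document; each statement's English description precedes it below -/
import Mathlib

section
/- Let λ^1,…,λ^r ∈ P_n, and for m ∈ {n, n+1} let I_m = ⟨λ^1,…,λ^r⟩_{S_m} ⊆ k[x_1,…,x_m] (identifying each λ ∈ P_n with (λ,0) ∈ P_{n+1}). Let μ = (μ_1,…,μ_n,μ_{n+1}) ∈ P_{n+1}, s = s(μ), c = (c_1,…,c_s) ≤ p(μ), and 0 ≤ i ≤ n. Then: (i) if μ_{n+1} = 0, then γ_i^{μ,c}(I_{n+1}) = γ_i^{(μ_1,…,μ_n),c}(I_n); (ii) if μ_{n+1} > 0, then γ_i^{μ,c}(I_{n+1}) = 0 when c_s = 0, and γ_i^{μ,c}(I_{n+1}) = γ_i^{(μ_1,…,μ_n), c−e_s}(I_n) when c_s > 0. -/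
open scoped BigOperators

noncomputable section
open Classical

/-! ## Generic (labeled) simplicial chain complexes and reduced homology over a field -/

section Homology

variable (K : Type) [Field K] {α : Type}

/-- Index type for chains: elements of `S` whose face (second component) has `j` elements. -/
def ChainIdx (S : Set (α × Finset ℕ)) (j : ℕ) : Type :=
  {q : α × Finset ℕ // q ∈ S ∧ q.2.card = j}

/-- The boundary of a basis element, with the usual simplicial signs. -/
noncomputable def bdElt (S : Set (α × Finset ℕ)) (j : ℕ) (q : ChainIdx S (j + 1)) :
    ChainIdx S j →₀ K :=
  ∑ v ∈ q.1.2,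
    if h : (q.1.1, q.1.2.erase v) ∈ S ∧ (q.1.2.erase v).card = j then
      ((-1 : K) ^ (q.1.2.filter (fun u => u ≤ v)).card) •
        Finsupp.single (⟨(q.1.1, q.1.2.erase v), h⟩ : ChainIdx S j) (1 : K)
    else 0

/-- The simplicial boundary map. -/
noncomputable def bd (S : Set (α × Finset ℕ)) (j : ℕ) :
    (ChainIdx S (j + 1) →₀ K) →ₗ[K] (ChainIdx S j →₀ K) :=
  Finsupp.linearCombination K (bdElt K S j)

/-- Cycles in homological degree `j` (chains are indexed by the cardinality of faces;
degree `j` corresponds to reduced topological degree `j - 1`). -/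
noncomputable def cycles (S : Set (α × Finset ℕ)) : (j : ℕ) → Submodule K (ChainIdx S j →₀ K)
  | 0 => ⊤
  | (i + 1) => LinearMap.ker (bd K S i)

/-- `rhd K S j` is the dimension of the reduced homology group `H̃_{j-1}` of the complex `S`
(the chain groups being finite dimensional, this is `dim` cycles `- dim` boundaries). -/
noncomputable def rhd (S : Set (α × Finset ℕ)) (j : ℕ) : ℕ :=
  Module.finrank K (cycles K S j) -
    Module.finrank K (LinearMap.range (bd K S j) ⊓ cycles K S j : Submodule K _)

/-- `hdim K S j = dim_K H̃_j(S; K)`, for `j : ℤ` (zero for `j ≤ -2`). -/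
noncomputable def hdim (S : Set (α × Finset ℕ)) (j : ℤ) : ℕ :=
  if 0 ≤ j + 1 then rhd K S (j + 1).toNat else 0

/-- View an unlabeled collection of faces as a labeled one (labels in `Unit`). -/
def lab (Δ : Set (Finset ℕ)) : Set (Unit × Finset ℕ) := {q | q.2 ∈ Δ}

/-- Dimension of reduced homology `H̃_{j-1}(Δ; K)` of a collection `Δ` of finite sets. -/
noncomputable def rhd0 (Δ : Set (Finset ℕ)) (j : ℕ) : ℕ := rhd K (lab Δ) j

/-- Dimension of reduced homology `H̃_j(Δ; K)`, `j : ℤ`. -/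
noncomputable def hdim0 (Δ : Set (Finset ℕ)) (j : ℤ) : ℕ := hdim K (lab Δ) j

end Homology

/-! ## Monomial ideals in `k[x_1, …, x_n]`, invariant under the symmetric group -/

section Poly

variable (K : Type) [Field K] (n : ℕ)

/-- The monomial `x^a` in `k[x_1, …, x_n]`. -/
noncomputable def mon (a : Fin n → ℕ) : MvPolynomial (Fin n) K :=
  MvPolynomial.monomial (Finsupp.equivFunOnFinite.symm a) 1

/-- A monomial ideal: an ideal generated by a set of monomials. -/
def IsMonomialIdeal (I : Ideal (MvPolynomial (Fin n) K)) : Prop :=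
  ∃ S : Set (Fin n → ℕ), I = Ideal.span (mon K n '' S)

/-- `I` is invariant under the action of `S_n` permuting the variables. -/
def IsSymmetricIdeal (I : Ideal (MvPolynomial (Fin n) K)) : Prop :=
  ∀ σ : Equiv.Perm (Fin n), Ideal.map (MvPolynomial.rename σ).toRingHom I = I

end Poly

/-! ## Partitions given by blocks `(d_1^{p_1}, …, d_s^{p_s}, 0^{p_{s+1}})` -/

section Blocks

/-- `cumsum p k = p 0 + ⋯ + p (k-1)`. -/
def cumsum (p : ℕ → ℕ) (k : ℕ) : ℕ := ∑ j ∈ Finset.range k, p j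

/-- The index of the block (among blocks `0, …, s`) containing position `i`,
for blocks of sizes `p 0, …, p (s-1)` followed by a final block. -/
def blkOf (p : ℕ → ℕ) (s i : ℕ) : ℕ :=
  ((Finset.range s).filter fun k => cumsum p (k + 1) ≤ i).card

/-- The partition `μ = (d_0^{p_0}, …, d_{s-1}^{p_{s-1}}, 0^{p_s})` (0-indexed blocks),
as a function of the position `i ∈ {0, …, n-1}` where `n = cumsum p (s+1)`. -/
def muOf (s : ℕ) (d p : ℕ → ℕ) (i : ℕ) : ℕ :=
  if blkOf p s i < s then d (blkOf p s i) else 0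

/-- The partition `μ ∖ c`, obtained from `μ` by replacing, for each `k`, the last `c k` of
the parts equal to `d k` by `d k - 1`. -/
def muMinus (s : ℕ) (d p c : ℕ → ℕ) (i : ℕ) : ℕ :=
  if blkOf p s i < s then
    (if p (blkOf p s i) - c (blkOf p s i) ≤ i - cumsum p (blkOf p s i) then
      d (blkOf p s i) - 1 else d (blkOf p s i))
  else 0

/-- Indicator vector of a finite set `F`. -/
def eF (F : Finset ℕ) (j : ℕ) : ℕ := if j ∈ F then 1 else 0

end Blocks

/-! ## The simplicial complexes `Δ^{μ,c}(I)` and `Γ^{μ,c}(I)` -/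

section Complexes

variable (K : Type) [Field K] (n : ℕ)

/-- The simplicial complex `Δ^{μ,c}(I) = {F ⊆ [s] : μ ∖ (c + e_F) ∈ P(I)}` (vertices are
`0, …, s-1`), for `μ = (d_0^{p_0}, …, d_{s-1}^{p_{s-1}}, 0^{p_s})` and `c ≤ p(μ)`. -/
def DeltaCx (I : Ideal (MvPolynomial (Fin n) K)) (s : ℕ) (d p c : ℕ → ℕ) :
    Set (Finset ℕ) :=
  {F | F ⊆ Finset.range s ∧
    mon K n (fun i => muMinus s d p (fun j => c j + eF F j) i.val) ∈ I}

/-- The Alexander dual complex `Γ^{μ,c}(I) = {F ⊆ [s] : μ ∖ (c + e_{[s]∖F}) ∈ O(I)}`. -/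
def GammaCx (I : Ideal (MvPolynomial (Fin n) K)) (s : ℕ) (d p c : ℕ → ℕ) :
    Set (Finset ℕ) :=
  {F | F ⊆ Finset.range s ∧
    mon K n (fun i => muMinus s d p
      (fun j => c j + (if j < s ∧ j ∉ F then 1 else 0)) i.val) ∉ I}

/-- `γ_i^{μ,c}(I) = dim_K H̃_{i-1}(Δ^{μ,c}(I); K)`. -/
noncomputable def gammaDim (I : Ideal (MvPolynomial (Fin n) K)) (s : ℕ) (d p c : ℕ → ℕ)
    (i : ℕ) : ℕ :=
  rhd0 K (DeltaCx K n I s d p c) i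

end Complexes

/-! ## Multigraded Tor via the Koszul complex

For a monomial ideal `I`, the multidegree-`a` strand of the Koszul complex `K_•(I)` is the
(shifted) reduced chain complex of the simplicial complex
`Δ_a^I = {F ⊆ [n] : a - e_F ≥ 0, x^{a - e_F} ∈ I}`, so that
`dim_K Tor_i(I, K)_a = dim_K H̃_{i-1}(Δ_a^I; K)`, and similarly for `R/I` with the
condition `x^{a-e_F} ∉ I`. -/

section Tor

variable (K : Type) [Field K] (n : ℕ)

/-- The Koszul simplicial complex of the ideal `I` in multidegree `a`. -/
def KosI (I : Ideal (MvPolynomial (Fin n) K)) (a : Fin n → ℕ) : Set (Finset ℕ) :=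
  {F | F ⊆ Finset.range n ∧ (∀ i : Fin n, (i : ℕ) ∈ F → 1 ≤ a i) ∧
    mon K n (fun i => a i - eF F i.val) ∈ I}

/-- The Koszul complex of `R/I` in multidegree `a`. -/
def KosQ (I : Ideal (MvPolynomial (Fin n) K)) (a : Fin n → ℕ) : Set (Finset ℕ) :=
  {F | F ⊆ Finset.range n ∧ (∀ i : Fin n, (i : ℕ) ∈ F → 1 ≤ a i) ∧
    mon K n (fun i => a i - eF F i.val) ∉ I}

/-- `dim_K Tor_i(I, K)_a`, for a monomial ideal `I` and a multidegree `a ∈ ℤ^n`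
(components with a negative coordinate vanish, so only `a ∈ ℕ^n` is needed). -/
noncomputable def torDim (I : Ideal (MvPolynomial (Fin n) K)) (i : ℕ) (a : Fin n → ℕ) : ℕ :=
  rhd0 K (KosI K n I a) i

/-- `dim_K Tor_i(R/I, K)_a` for a monomial ideal `I`. -/
noncomputable def torQDim (I : Ideal (MvPolynomial (Fin n) K)) (i : ℕ) (a : Fin n → ℕ) : ℕ :=
  rhd0 K (KosQ K n I a) i

/-- `dim_K Tor_i(I, K)_{⟨μ⟩}`: the sum of `dim_K Tor_i(I, K)_a` over all rearrangements `a`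
of the partition `μ`. -/
noncomputable def torDimSym (I : Ideal (MvPolynomial (Fin n) K)) (i : ℕ) (μ : Fin n → ℕ) : ℕ :=
  ∑ a ∈ Finset.image (fun σ : Equiv.Perm (Fin n) => μ ∘ σ) Finset.univ, torDim K n I i a

/-- `dim_K Tor_i(R/I, K)_{⟨μ⟩}`. -/
noncomputable def torQDimSym (I : Ideal (MvPolynomial (Fin n) K)) (i : ℕ) (μ : Fin n → ℕ) : ℕ :=
  ∑ a ∈ Finset.image (fun σ : Equiv.Perm (Fin n) => μ ∘ σ) Finset.univ, torQDim K n I i a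

end Tor

/-! ## Extended partitions in `P_n^∞` and the dual generators of an `S_n`-invariant
monomial ideal -/

section ExtendedPartitions

variable (K : Type) [Field K] (n : ℕ)

/-- `ℓ(μ)`: the number of entries of `μ ∈ P_n^∞` equal to `∞`. -/
def ellInf (μ : Fin n → ℕ∞) : ℕ := (Finset.univ.filter fun i => μ i = ⊤).card

/-- The largest finite entry of `μ ∈ P_n^∞` (i.e. the first finite entry, `μ` being
weakly decreasing). -/
def topVal (μ : Fin n → ℕ∞) : ℕ := Finset.univ.sup fun i => (μ i).toNat

/-- `μ^+ ∈ P_n`: each `∞` entry of `μ` is replaced by (largest finite entry)` + 1`. -/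
def plusOf (μ : Fin n → ℕ∞) (i : Fin n) : ℕ :=
  if μ i = ⊤ then topVal n μ + 1 else (μ i).toNat

/-- `μ̃ = μ^+ + (0^{ℓ(μ)}, 1^{n - ℓ(μ)}) ∈ P_n`. -/
def tildeOf (μ : Fin n → ℕ∞) (i : Fin n) : ℕ :=
  if μ i = ⊤ then topVal n μ + 1 else (μ i).toNat + 1

/-- The ideal `Q_μ = ∩_{σ ∈ S_n} σ((x_k^{μ_k + 1}, …, x_n^{μ_n + 1}))`, where
`μ_k, …, μ_n` are the finite entries of `μ ∈ P_n^∞`. -/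
noncomputable def Qgen (μ : Fin n → ℕ∞) : Ideal (MvPolynomial (Fin n) K) :=
  ⨅ σ : Equiv.Perm (Fin n),
    Ideal.map (MvPolynomial.rename σ).toRingHom
      (Ideal.span {g | ∃ i : Fin n, μ i ≠ ⊤ ∧ g = MvPolynomial.X i ^ ((μ i).toNat + 1)})

/-- `Λ` is the (finite) set of dual generators of `I`, i.e. `I = ∩_{μ ∈ Λ} Q_μ` is the
irredundant presentation of `I` by ideals `Q_μ`. -/
def IsDualPresentation (I : Ideal (MvPolynomial (Fin n) K))
    (Λ : Finset (Fin n → ℕ∞)) : Prop :=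
  (∀ μ ∈ Λ, Antitone μ) ∧ (I = ⨅ μ ∈ Λ, Qgen K n μ) ∧
    ∀ μ ∈ Λ, I ≠ ⨅ ρ ∈ Λ, ⨅ _ : ρ ≠ μ, Qgen K n ρ

/-- The partial order `≼` on dual generators: `μ ≼ ρ` iff `μ̃ ≤ ρ̃` (componentwise) and
`ℓ(μ) - ℓ(ρ) ≤ |ρ̃| - |μ̃|`. -/
def preceq (μ ρ : Fin n → ℕ∞) : Prop :=
  (∀ i, tildeOf n μ i ≤ tildeOf n ρ i) ∧
    (∑ i, tildeOf n μ i) + ellInf n μ ≤ (∑ i, tildeOf n ρ i) + ellInf n ρ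

/-- The extended partition `ρ = (∞^{p_0}, d_1^{p_1}, …, d_s^{p_s}) ∈ P_n^∞`
(so `n = p 0 + p 1 + ⋯ + p s`), as a function of the position `i ∈ {0, …, n-1}`. -/
def rhoOf (s : ℕ) (d p : ℕ → ℕ) (i : ℕ) : ℕ∞ :=
  if blkOf p (s + 1) i = 0 then ⊤ else ((d (blkOf p (s + 1) i) : ℕ) : ℕ∞)

end ExtendedPartitions

/-- Extend a partition of `P_n` to `P_m` (`m ≥ n`) by appending zeros. -/
def extFun (n m : ℕ) (a : Fin n → ℕ) (t : Fin m) : ℕ :=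
  if h : (t : ℕ) < n then a ⟨t, h⟩ else 0

/-- The ideal `I_m = ⟨λ^1, …, λ^r⟩_{S_m} ⊆ k[x_1, …, x_m]` generated by the `S_m`-orbits
of the monomials of the partitions `L j ∈ P_n` (extended by zeros). -/
def symIdealM (K : Type) [Field K] (m n r : ℕ) (L : Fin r → Fin n → ℕ) :
    Ideal (MvPolynomial (Fin m) K) :=
  Ideal.span {f | ∃ (j : Fin r) (σ : Equiv.Perm (Fin m)),
    f = MvPolynomial.rename σ (mon K m (extFun n m (L j)))}


/-! ## Auxiliary lemmas -/

section Aux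

variable {K : Type} [Field K]

lemma mon_mem_symIdealM_iff (m n r : ℕ) (L : Fin r → Fin n → ℕ) (a : Fin m → ℕ) :
    mon K m a ∈ symIdealM K m n r L ↔
      ∃ (j : Fin r) (σ : Equiv.Perm (Fin m)), ∀ t, extFun n m (L j) (σ t) ≤ a t := by
  have hset : {f : MvPolynomial (Fin m) K | ∃ (j : Fin r) (σ : Equiv.Perm (Fin m)),
      f = MvPolynomial.rename σ (mon K m (extFun n m (L j)))} =
      (fun s => MvPolynomial.monomial s (1 : K)) ''
        {u : Fin m →₀ ℕ | ∃ (j : Fin r) (σ : Equiv.Perm (Fin m)),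
          u = Finsupp.mapDomain σ (Finsupp.equivFunOnFinite.symm (extFun n m (L j)))} := by
    ext f
    constructor
    · rintro ⟨j, σ, rfl⟩
      exact ⟨_, ⟨j, σ, rfl⟩, (MvPolynomial.rename_monomial σ _ 1).symm⟩
    · rintro ⟨u, ⟨j, σ, rfl⟩, rfl⟩
      exact ⟨j, σ, (MvPolynomial.rename_monomial σ _ 1).symm⟩
  rw [symIdealM, hset, MvPolynomial.mem_ideal_span_monomial_image]
  have hsupp : (mon K m a).support = {Finsupp.equivFunOnFinite.symm a} := by
    rw [mon, MvPolynomial.support_monomial, if_neg one_ne_zero]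
  rw [mon, ← mon, hsupp]
  simp only [Finset.mem_singleton, forall_eq, Set.mem_setOf_eq, exists_exists_and_eq_and]
  constructor
  · rintro ⟨u, ⟨j, σ, rfl⟩, hle⟩
    refine ⟨j, σ.symm, fun t => ?_⟩
    have := Finsupp.le_def.mp hle t
    rw [Finsupp.mapDomain_equiv_apply] at this
    simpa using this
  · rintro ⟨j, σ, hle⟩
    refine ⟨_, ⟨j, σ.symm, rfl⟩, Finsupp.le_def.mpr fun t => ?_⟩
    rw [Finsupp.mapDomain_equiv_apply]
    simpa using hle t


lemma extFun_self (n : ℕ) (g : Fin n → ℕ) (t : Fin n) : extFun n n g t = g t := by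
  rw [extFun, dif_pos t.isLt]

/-- **Lemma A**: restriction of monomial membership, when the last exponent is minimal. -/
lemma mon_mem_succ_iff (n r : ℕ) (L : Fin r → Fin n → ℕ) (a : Fin (n+1) → ℕ)
    (hmin : ∀ t, a (Fin.last n) ≤ a t) :
    mon K (n+1) a ∈ symIdealM K (n+1) n r L ↔
      mon K n (fun t => a t.castSucc) ∈ symIdealM K n n r L := by
  rw [mon_mem_symIdealM_iff, mon_mem_symIdealM_iff]
  constructor
  · rintro ⟨j, σ, hσ⟩
    set u0 := σ.symm (Fin.last n) with hu0
    set σ' : Equiv.Perm (Fin (n+1)) := (Equiv.swap u0 (Fin.last n)).trans σ with hσ'def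
    have hσ'last : σ' (Fin.last n) = Fin.last n := by
      simp [hσ'def, Equiv.swap_apply_right, hu0]
    have hσ'le : ∀ t, extFun n (n+1) (L j) (σ' t) ≤ a t := by
      intro t
      by_cases h1 : t = u0
      · subst h1
        have h2 : σ' u0 = σ (Fin.last n) := by simp [hσ'def, Equiv.swap_apply_left]
        rw [h2]
        exact le_trans (hσ (Fin.last n)) (hmin u0)
      · by_cases h2 : t = Fin.last n
        · subst h2
          rw [hσ'last, extFun, dif_neg (by simp)]
          exact Nat.zero_le _
        · have h3 : σ' t = σ t := by
            simp [hσ'def, Equiv.swap_apply_of_ne_of_ne h1 h2]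
          rw [h3]; exact hσ t
    have hne : ∀ t : Fin n, σ' t.castSucc ≠ Fin.last n := by
      intro t h
      exact (Fin.castSucc_lt_last t).ne (σ'.injective (h.trans hσ'last.symm))
    let f : Fin n → Fin n := fun t => ⟨(σ' t.castSucc).val, Fin.val_lt_last (hne t)⟩
    have hinj : Function.Injective f := by
      intro t1 t2 h
      have hval : (σ' t1.castSucc).val = (σ' t2.castSucc).val := by
        have h5 := congrArg Fin.val h
        simpa [f] using h5
      exact Fin.castSucc_injective n (σ'.injective (Fin.ext hval))
    refine ⟨j, Equiv.ofBijective f (Finite.injective_iff_bijective.mp hinj), fun t => ?_⟩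
    rw [Equiv.ofBijective_apply, extFun_self]
    have h4 := hσ'le t.castSucc
    rw [extFun, dif_pos (Fin.val_lt_last (hne t))] at h4
    exact h4
  · rintro ⟨j, τ, hτ⟩
    set e : Fin (n+1) ≃ Option (Fin n) := finSuccEquiv' (Fin.last n) with he
    refine ⟨j, e.trans ((Equiv.optionCongr τ).trans e.symm), fun t => ?_⟩
    induction t using Fin.lastCases with
    | last =>
      have h1 : (e.trans ((Equiv.optionCongr τ).trans e.symm)) (Fin.last n) = Fin.last n := by
        simp [he, finSuccEquiv'_at, finSuccEquiv'_symm_none]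
      rw [h1, extFun, dif_neg (by simp)]
      exact Nat.zero_le _
    | cast t =>
      have h1 : (e.trans ((Equiv.optionCongr τ).trans e.symm)) t.castSucc =
          (τ t).castSucc := by
        have h2 : e t.castSucc = some t := by
          rw [he, ← Fin.succAbove_last, finSuccEquiv'_succAbove]
        rw [Equiv.trans_apply, Equiv.trans_apply, h2]
        simp [he]
      rw [h1, extFun, dif_pos (show ((τ t).castSucc : ℕ) < n from (τ t).isLt)]
      have h3 := hτ t
      rw [extFun_self] at h3
      exact h3


end Aux


/-! ## Cone lemma: reduced homology of a cone vanishes -/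

lemma sign_cancel (K : Type) [Field K] (v : ℕ) {F : Finset ℕ} {u : ℕ}
    (hu : u ∈ F) (hv : v ∉ F) (huv : u ≠ v) :
    ((-1 : K) ^ ((insert v F).filter (fun w => w ≤ v)).card) *
      ((-1 : K) ^ ((insert v F).filter (fun w => w ≤ u)).card) =
    - (((-1 : K) ^ (F.filter (fun w => w ≤ u)).card) *
      ((-1 : K) ^ ((insert v (F.erase u)).filter (fun w => w ≤ v)).card)) := by
  have hvf : v ∉ F.filter (fun w => w ≤ v) := fun h => hv (Finset.mem_filter.mp h).1
  have hvf' : v ∉ (F.erase u).filter (fun w => w ≤ v) :=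
    fun h => hv (Finset.mem_of_mem_erase (Finset.mem_filter.mp h).1)
  have c1 : ((insert v F).filter (fun w => w ≤ v)).card
      = (F.filter (fun w => w ≤ v)).card + 1 := by
    rw [Finset.filter_insert, if_pos le_rfl, Finset.card_insert_of_notMem hvf]
  have c3' : ((insert v (F.erase u)).filter (fun w => w ≤ v)).card
      = ((F.erase u).filter (fun w => w ≤ v)).card + 1 := by
    rw [Finset.filter_insert, if_pos le_rfl, Finset.card_insert_of_notMem hvf']
  rcases lt_or_gt_of_ne huv with h | h
  · -- u < v
    have c2 : ((insert v F).filter (fun w => w ≤ u)).card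
        = (F.filter (fun w => w ≤ u)).card := by
      rw [Finset.filter_insert, if_neg (by omega)]
    have hum : u ∈ F.filter (fun w => w ≤ v) := Finset.mem_filter.mpr ⟨hu, le_of_lt h⟩
    have hpos : 0 < (F.filter (fun w => w ≤ v)).card := Finset.card_pos.mpr ⟨u, hum⟩
    have c3 : ((F.erase u).filter (fun w => w ≤ v)).card
        = (F.filter (fun w => w ≤ v)).card - 1 := by
      rw [Finset.filter_erase, Finset.card_erase_of_mem hum]
    rw [c1, c2, c3', c3]
    rw [Nat.sub_add_cancel hpos, pow_succ]
    ring
  · -- v < u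
    have c2 : ((insert v F).filter (fun w => w ≤ u)).card
        = (F.filter (fun w => w ≤ u)).card + 1 := by
      rw [Finset.filter_insert, if_pos (le_of_lt h),
        Finset.card_insert_of_notMem (fun hh => hv (Finset.mem_filter.mp hh).1)]
    have c3 : ((F.erase u).filter (fun w => w ≤ v)).card
        = (F.filter (fun w => w ≤ v)).card := by
      rw [Finset.filter_erase, Finset.erase_eq_of_notMem
        (fun hh => absurd (Finset.mem_filter.mp hh).2 (by omega))]
    rw [c1, c2, c3', c3]
    ring

section Cone

variable (K : Type) [Field K] (Δ : Set (Finset ℕ)) (v : ℕ)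

/-- The contracting homotopy on basis elements: `F ↦ ± (F ∪ {v})`. -/
noncomputable def hElt (j : ℕ) (q : ChainIdx (lab Δ) j) : ChainIdx (lab Δ) (j + 1) →₀ K :=
  if h : v ∉ q.1.2 ∧ (((), insert v q.1.2) ∈ lab Δ ∧ (insert v q.1.2).card = j + 1) then
    ((-1 : K) ^ ((insert v q.1.2).filter (fun u => u ≤ v)).card) •
      Finsupp.single (⟨((), insert v q.1.2), h.2⟩ : ChainIdx (lab Δ) (j + 1)) (1 : K)
  else 0

/-- The contracting homotopy. -/
noncomputable def hmap (j : ℕ) :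
    (ChainIdx (lab Δ) j →₀ K) →ₗ[K] (ChainIdx (lab Δ) (j + 1) →₀ K) :=
  Finsupp.linearCombination K (hElt K Δ v j)

variable {Δ v}

lemma key_deg0 (hcone : ∀ F : Finset ℕ, F ∈ Δ ↔ insert v F ∈ Δ)
    (q : ChainIdx (lab Δ) 0) :
    bd K (lab Δ) 0 (hmap K Δ v 0 (Finsupp.single q 1)) = Finsupp.single q 1 := by
  obtain ⟨⟨⟨⟩, F⟩, hmem, hcard⟩ := q
  have hF : F ∈ Δ := hmem
  have hFe : F = ∅ := Finset.card_eq_zero.mp hcard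
  subst hFe
  have hins : insert v (∅ : Finset ℕ) ∈ Δ := (hcone ∅).mp hF
  erw [hmap, Finsupp.linearCombination_single, one_smul, hElt]
  erw [dif_pos (by exact ⟨Finset.notMem_empty v, hins, by simp⟩)]
  erw [map_smul, bd, Finsupp.linearCombination_single, one_smul, bdElt]
  simp only
  erw [Finset.sum_insert (Finset.notMem_empty v), Finset.sum_empty, add_zero]
  have hpr : (((), (insert v (∅:Finset ℕ)).erase v) ∈ lab Δ) ∧ ((insert v (∅:Finset ℕ)).erase v).card = 0 := by
    rw [Finset.erase_insert (Finset.notMem_empty v)]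
    exact ⟨hmem, rfl⟩
  erw [dif_pos hpr, smul_smul, ← mul_pow]
  norm_num
  erw [one_smul]
  rfl

lemma single_face_congr {S : Set (Unit × Finset ℕ)} {j : ℕ} {G G' : Finset ℕ} (h : G = G')
    (hG : (((), G) ∈ S) ∧ G.card = j) (hG' : (((), G') ∈ S) ∧ G'.card = j) :
    (Finsupp.single (⟨((), G), hG⟩ : ChainIdx S j) (1 : K)) = Finsupp.single ⟨((), G'), hG'⟩ 1 := by
  subst h; rfl

lemma key_deg (hcone : ∀ F : Finset ℕ, F ∈ Δ ↔ insert v F ∈ Δ) (j : ℕ)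
    (q : ChainIdx (lab Δ) (j + 1)) :
    bd K (lab Δ) (j + 1) (hmap K Δ v (j + 1) (Finsupp.single q 1)) +
      hmap K Δ v j (bd K (lab Δ) j (Finsupp.single q 1)) = Finsupp.single q 1 := by
  obtain ⟨⟨⟨⟩, F⟩, hmem, hcard⟩ := q
  have hF : F ∈ Δ := hmem
  have hcard' : F.card = j + 1 := hcard
  simp only [hmap, bd]
  erw [Finsupp.linearCombination_single, Finsupp.linearCombination_single]
  simp only [one_smul]
  by_cases hvF : v ∈ F
  · -- v ∈ F : first term vanishes, second gives back the basis element
    erw [hElt, dif_neg (fun h => h.1 hvF), map_zero, zero_add, bdElt, map_sum]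
    erw [Finset.sum_eq_single v]
    · have hc : (((), F.erase v) ∈ lab Δ) ∧ (F.erase v).card = j := by
        constructor
        · show F.erase v ∈ Δ
          rw [hcone, Finset.insert_erase hvF]; exact hF
        · rw [Finset.card_erase_of_mem hvF, hcard']
          omega
      erw [dif_pos hc, map_smul, Finsupp.linearCombination_single, one_smul, hElt]
      have hin : v ∉ F.erase v ∧ ((((), insert v (F.erase v)) ∈ lab Δ) ∧
          (insert v (F.erase v)).card = j + 1) := by
        refine ⟨Finset.notMem_erase v F, ?_, ?_⟩ <;>
          rw [Finset.insert_erase hvF]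
        exacts [hmem, hcard']
      erw [dif_pos hin, smul_smul]
      have e1 : ((insert v (F.erase v)).filter (fun u => u ≤ v)).card
          = (F.filter (fun u => u ≤ v)).card := by rw [Finset.insert_erase hvF]
      erw [e1, ← mul_pow]
      norm_num
      erw [one_smul]
      exact single_face_congr K (Finset.insert_erase hvF) _ _
    · intro u huF huv
      rcases Classical.em ((((), F.erase u) ∈ lab Δ) ∧ (F.erase u).card = j) with hc | hc
      · erw [dif_pos hc, map_smul, Finsupp.linearCombination_single, one_smul, hElt,
          dif_neg, smul_zero]
        intro hh
        exact hh.1 (Finset.mem_erase.mpr ⟨fun h => huv h.symm, hvF⟩)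
      · erw [dif_neg hc, map_zero]
    · intro hvnF; exact absurd hvF hvnF
  · -- v ∉ F
    have hG : insert v F ∈ Δ := (hcone F).mp hF
    have hcardG : (insert v F).card = j + 1 + 1 := by
      rw [Finset.card_insert_of_notMem hvF, hcard']
    erw [hElt, dif_pos (⟨hvF, hG, hcardG⟩ :
      v ∉ F ∧ ((((), insert v F) ∈ lab Δ) ∧ (insert v F).card = j + 1 + 1)),
      map_smul, Finsupp.linearCombination_single, one_smul]
    simp only [bdElt]
    erw [map_sum, Finset.sum_insert hvF, smul_add, Finset.smul_sum,
      add_assoc, ← Finset.sum_add_distrib]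
    have hmain : ((-1:K) ^ ((insert v F).filter (fun u => u ≤ v)).card) •
        (if h : (((), (insert v F).erase v) ∈ lab Δ) ∧ ((insert v F).erase v).card = j + 1 then
          ((-1 : K) ^ ((insert v F).filter (fun u => u ≤ v)).card) •
            Finsupp.single (⟨((), (insert v F).erase v), h⟩ : ChainIdx (lab Δ) (j+1)) (1:K)
        else 0) = Finsupp.single ⟨(PUnit.unit, F), hmem, hcard⟩ (1:K) := by
      have hc : (((), (insert v F).erase v) ∈ lab Δ) ∧ ((insert v F).erase v).card = j + 1 := by
        rw [Finset.erase_insert hvF]; exact ⟨hmem, hcard'⟩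
      erw [dif_pos hc, smul_smul, ← mul_pow]
      norm_num
      exact single_face_congr K (Finset.erase_eq_of_notMem hvF) _ _
    erw [hmain, add_eq_left]
    apply Finset.sum_eq_zero
    intro u huF
    have huv : u ≠ v := fun h => hvF (h ▸ huF)
    have hface : (insert v F).erase u = insert v (F.erase u) :=
      Finset.erase_insert_of_ne huv.symm
    have hvFe : v ∉ F.erase u := fun h => hvF (Finset.mem_of_mem_erase h)
    have hcarde : (F.erase u).card = j := by
      rw [Finset.card_erase_of_mem huF, hcard']
      omega
    have hcardie : (insert v (F.erase u)).card = j + 1 := by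
      rw [Finset.card_insert_of_notMem hvFe, hcarde]
    rcases Classical.em (F.erase u ∈ Δ) with hC | hC
    · have hc1 : (((), (insert v F).erase u) ∈ lab Δ) ∧ ((insert v F).erase u).card = j + 1 := by
        rw [hface]
        exact ⟨(hcone _).mp hC, hcardie⟩
      have hc2 : (((), F.erase u) ∈ lab Δ) ∧ (F.erase u).card = j := ⟨hC, hcarde⟩
      erw [dif_pos hc1, dif_pos hc2, map_smul, Finsupp.linearCombination_single,
        one_smul, hElt]
      have hc3 : v ∉ F.erase u ∧ ((((), insert v (F.erase u)) ∈ lab Δ) ∧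
          (insert v (F.erase u)).card = j + 1) := ⟨hvFe, (hcone _).mp hC, hcardie⟩
      erw [dif_pos hc3, smul_smul, smul_smul,
        single_face_congr K hface hc1 ⟨(hcone _).mp hC, hcardie⟩,
        ← add_smul, sign_cancel K v huF hvF huv, neg_add_cancel, zero_smul]
    · have hc1 : ¬ ((((), (insert v F).erase u) ∈ lab Δ) ∧ ((insert v F).erase u).card = j + 1) := by
        rw [hface]
        intro hh
        exact hC ((hcone _).mpr hh.1)
      have hc2 : ¬ ((((), F.erase u) ∈ lab Δ) ∧ (F.erase u).card = j) := fun hh => hC hh.1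
      erw [dif_neg hc1, dif_neg hc2, map_zero, smul_zero, add_zero]

lemma rhd0_eq_zero_of_cone (hcone : ∀ F : Finset ℕ, F ∈ Δ ↔ insert v F ∈ Δ) (j : ℕ) :
    rhd0 K Δ j = 0 := by
  have hle : cycles K (lab Δ) j ≤ LinearMap.range (bd K (lab Δ) j) := by
    cases j with
    | zero =>
      intro x _
      refine ⟨hmap K Δ v 0 x, ?_⟩
      have hid : (bd K (lab Δ) 0).comp (hmap K Δ v 0) = LinearMap.id := by
        apply Finsupp.lhom_ext
        intro a b
        have hb : (Finsupp.single a b) = b • Finsupp.single a (1:K) := by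
          rw [Finsupp.smul_single, smul_eq_mul, mul_one]
        simp only [hb, map_smul, LinearMap.comp_apply, LinearMap.id_apply]
        rw [key_deg0 K hcone a]
      exact congrArg (fun f => f x) hid
    | succ i =>
      intro x hx
      refine ⟨hmap K Δ v (i+1) x, ?_⟩
      have hid : (bd K (lab Δ) (i+1)).comp (hmap K Δ v (i+1)) +
          (hmap K Δ v i).comp (bd K (lab Δ) i) = LinearMap.id := by
        apply Finsupp.lhom_ext
        intro a b
        have hb : (Finsupp.single a b) = b • Finsupp.single a (1:K) := by
          rw [Finsupp.smul_single, smul_eq_mul, mul_one]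
        simp only [hb, map_smul, LinearMap.add_apply, LinearMap.comp_apply,
          LinearMap.id_apply]
        rw [key_deg K hcone i a]
      have h2 := congrArg (fun f => f x) hid
      simp only [LinearMap.add_apply, LinearMap.comp_apply, LinearMap.id_apply] at h2
      have hbx : bd K (lab Δ) i x = 0 := LinearMap.mem_ker.mp hx
      rw [hbx, map_zero, add_zero] at h2
      exact h2
  rw [rhd0, rhd, inf_eq_right.mpr hle, Nat.sub_self]

end Cone




/-! ## Combinatorics of blocks -/

section Blk

lemma cumsum_succ (p : ℕ → ℕ) (k : ℕ) : cumsum p (k + 1) = cumsum p k + p k :=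
  Finset.sum_range_succ p k

lemma cumsum_mono (p : ℕ → ℕ) {k l : ℕ} (h : k ≤ l) : cumsum p k ≤ cumsum p l :=
  Finset.sum_le_sum_of_subset (Finset.range_subset_range.mpr h)

lemma blkOf_le (p : ℕ → ℕ) (s i : ℕ) : blkOf p s i ≤ s :=
  le_trans (Finset.card_filter_le _ _) (le_of_eq (Finset.card_range s))

lemma blkOf_eq_s {p : ℕ → ℕ} {s i : ℕ} (h : cumsum p s ≤ i) : blkOf p s i = s := by
  rw [blkOf, Finset.filter_true_of_mem, Finset.card_range]
  intro k hk
  exact le_trans (cumsum_mono p (Finset.mem_range.mp hk)) h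

lemma blkOf_lt {p : ℕ → ℕ} {s i : ℕ} (hs : 0 < s) (h : i < cumsum p s) :
    blkOf p s i < s := by
  by_contra hcon
  push_neg at hcon
  have h1 : blkOf p s i = s := le_antisymm (blkOf_le p s i) hcon
  have h2 : (Finset.range s).filter (fun k => cumsum p (k + 1) ≤ i) = Finset.range s :=
    Finset.eq_of_subset_of_card_le (Finset.filter_subset _ _)
      (by rw [Finset.card_range]; exact h1.symm.le)
  have h3 : s - 1 ∈ (Finset.range s).filter (fun k => cumsum p (k + 1) ≤ i) := by
    rw [h2]; exact Finset.mem_range.mpr (by omega)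
  have h4 := (Finset.mem_filter.mp h3).2
  rw [show s - 1 + 1 = s by omega] at h4
  omega

lemma blkOf_eq {p : ℕ → ℕ} {s i b : ℕ} (hbs : b ≤ s) (h1 : cumsum p b ≤ i)
    (h2 : i < cumsum p (b + 1)) : blkOf p s i = b := by
  have : (Finset.range s).filter (fun k => cumsum p (k + 1) ≤ i) = Finset.range b := by
    ext k
    simp only [Finset.mem_filter, Finset.mem_range]
    constructor
    · rintro ⟨hks, hk⟩
      by_contra hcon
      push_neg at hcon
      have hmono : cumsum p (b + 1) ≤ cumsum p (k + 1) := cumsum_mono p (by omega)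
      omega
    · intro hkb
      have hmono : cumsum p (k + 1) ≤ cumsum p b := cumsum_mono p (by omega)
      exact ⟨by omega, le_trans hmono h1⟩
  rw [blkOf, this, Finset.card_range]

lemma cumsum_blkOf_le (p : ℕ → ℕ) (s i : ℕ) : cumsum p (blkOf p s i) ≤ i := by
  set T := (Finset.range s).filter (fun k => cumsum p (k + 1) ≤ i) with hT
  rcases T.eq_empty_or_nonempty with h | h
  · rw [blkOf, ← hT, h]
    simp [cumsum]
  · have hM := T.max'_mem h
    have hsub : T ⊆ Finset.range (T.max' h + 1) := fun k hk =>
      Finset.mem_range.mpr (by have := Finset.le_max' T k hk; omega)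
    have hcard : T.card ≤ T.max' h + 1 := by
      have := Finset.card_le_card hsub
      rwa [Finset.card_range] at this
    have hMle : cumsum p (T.max' h + 1) ≤ i := (Finset.mem_filter.mp hM).2
    exact le_trans (cumsum_mono p (by rw [blkOf, ← hT]; exact hcard)) hMle

lemma blkOf_congr {p p' : ℕ → ℕ} {s i : ℕ}
    (h : ∀ k, k < s → (cumsum p' (k + 1) ≤ i ↔ cumsum p (k + 1) ≤ i)) :
    blkOf p' s i = blkOf p s i := by
  rw [blkOf, blkOf]
  congr 1
  apply Finset.filter_congr
  intro k hk
  simp [h k (Finset.mem_range.mp hk)]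

lemma muMinus_congr_c (s : ℕ) (d p : ℕ → ℕ) {c1 c2 : ℕ → ℕ} (i : ℕ)
    (h : c1 (blkOf p s i) = c2 (blkOf p s i)) :
    muMinus s d p c1 i = muMinus s d p c2 i := by
  rw [muMinus, muMinus, h]

/-- Case (i): decreasing the size of the final `0`-block does not change `μ ∖ c`. -/
lemma muMinus_shrink_last (s : ℕ) (d p c' : ℕ → ℕ) (i : ℕ) :
    muMinus s d (fun k => if k = s then p k - 1 else p k) c' i = muMinus s d p c' i := by
  have hcum : ∀ k, k ≤ s → cumsum (fun k => if k = s then p k - 1 else p k) k = cumsum p k := by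
    intro k hk
    exact Finset.sum_congr rfl (fun j hj => if_neg (by have := Finset.mem_range.mp hj; omega))
  have hblk : blkOf (fun k => if k = s then p k - 1 else p k) s i = blkOf p s i :=
    blkOf_congr (fun k hk => by rw [hcum (k + 1) (by omega)])
  rw [muMinus, muMinus, hblk]
  by_cases h : blkOf p s i < s
  · rw [if_pos h, if_pos h, if_neg (show ¬ blkOf p s i = s by omega),
      hcum (blkOf p s i) (by omega)]
  · rw [if_neg h, if_neg h]

/-- Case (ii): decreasing the size of block `s-1` together with `c_{s-1}`. -/
lemma muMinus_shrink_blk (s : ℕ) (d p c1 c2 : ℕ → ℕ) (hs : 0 < s)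
    (hc2 : c2 (s - 1) + 1 = c1 (s - 1)) (hc2' : ∀ k, k < s - 1 → c2 k = c1 k)
    (hp : 1 ≤ p (s - 1)) (i : ℕ) (hi : i + 1 < cumsum p s) :
    muMinus s d (fun k => if k = s - 1 then p k - 1 else p k) c2 i = muMinus s d p c1 i := by
  have hs1 : s - 1 + 1 = s := by omega
  have hcum : ∀ k, k ≤ s - 1 →
      cumsum (fun k => if k = s - 1 then p k - 1 else p k) k = cumsum p k := by
    intro k hk
    exact Finset.sum_congr rfl (fun j hj => if_neg (by have := Finset.mem_range.mp hj; omega))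
  have hcums : cumsum (fun k => if k = s - 1 then p k - 1 else p k) s + 1 = cumsum p s := by
    have e1 := cumsum_succ (fun k => if k = s - 1 then p k - 1 else p k) (s - 1)
    have e2 := cumsum_succ p (s - 1)
    rw [hs1] at e1 e2
    rw [e1, e2, hcum (s - 1) le_rfl, if_pos rfl]
    omega
  have hblk : blkOf (fun k => if k = s - 1 then p k - 1 else p k) s i = blkOf p s i := by
    apply blkOf_congr
    intro k hk
    rcases Nat.lt_or_ge (k + 1) s with h1 | h1
    · rw [hcum (k + 1) (by omega)]
    · have hks : k + 1 = s := by omega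
      rw [hks]
      omega
  rw [muMinus, muMinus, hblk]
  by_cases h : blkOf p s i < s
  · rw [if_pos h, if_pos h]
    by_cases hb : blkOf p s i = s - 1
    · rw [hb, hcum (s - 1) le_rfl, if_pos rfl]
      by_cases hcond : p (s - 1) - c1 (s - 1) ≤ i - cumsum p (s - 1)
      · rw [if_pos (by omega), if_pos hcond]
      · rw [if_neg (by omega), if_neg hcond]
    · rw [hcum (blkOf p s i) (by omega), if_neg hb, hc2' _ (by omega)]
  · rw [if_neg h, if_neg h]

/-- Strict decrease of the block values. -/
lemma d_lt_of_lt {s : ℕ} {d : ℕ → ℕ} (hd : ∀ k, k + 1 < s → d (k + 1) < d k) :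
    ∀ k l, k < l → l < s → d l < d k := by
  intro k l
  induction l with
  | zero => omega
  | succ m ih =>
    intro hkm hms
    rcases Nat.lt_or_ge k m with h | h
    · exact lt_trans (hd m hms) (ih h (by omega))
    · have : k = m := by omega
      subst this
      exact hd k hms

end Blk

set_option maxHeartbeats 1000000 in
/-- Let `λ^1, …, λ^r ∈ P_n` and `I_m = ⟨λ^1, …, λ^r⟩_{S_m}` for
`m ∈ {n, n+1}`.  Let `μ = (μ_1, …, μ_{n+1}) ∈ P_{n+1}` have block data `(s, d, p)`
(so `μ_{n+1} = muOf s d p n`), `c ≤ p(μ)`, `0 ≤ i ≤ n`.  Then: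
(i) if `μ_{n+1} = 0` then `γ_i^{μ,c}(I_{n+1}) = γ_i^{(μ_1,…,μ_n),c}(I_n)` (the restricted
partition has the last block size `p_{s+1}` decreased by one);
(ii) if `μ_{n+1} > 0` then `γ_i^{μ,c}(I_{n+1}) = 0` when `c_s = 0`, and
`γ_i^{μ,c}(I_{n+1}) = γ_i^{(μ_1,…,μ_n), c - e_s}(I_n)` when `c_s > 0` (the restricted
partition has `p_s` decreased by one).  Blocks are `0`-indexed, so `c_s = c (s-1)`. -/
theorem statement_17 (K : Type) [Field K] (n r : ℕ)
    (L : Fin r → Fin n → ℕ) (hL : ∀ j, Antitone (L j))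
    (s : ℕ) (d p : ℕ → ℕ)
    (hn : n + 1 = cumsum p (s + 1))
    (hd : ∀ k, k + 1 < s → d (k + 1) < d k)
    (hdpos : ∀ k, k < s → 0 < d k)
    (hppos : ∀ k, k < s → 0 < p k)
    (c : ℕ → ℕ) (hc : ∀ k, k < s → c k + 1 ≤ p k)
    (i : ℕ) (hi : i ≤ n) :
    (muOf s d p n = 0 →
      gammaDim K (n + 1) (symIdealM K (n + 1) n r L) s d p c i =
        gammaDim K n (symIdealM K n n r L) s d (fun k => if k = s then p k - 1 else p k) c i) ∧
    (0 < muOf s d p n →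
      (c (s - 1) = 0 →
        gammaDim K (n + 1) (symIdealM K (n + 1) n r L) s d p c i = 0) ∧
      (0 < c (s - 1) →
        gammaDim K (n + 1) (symIdealM K (n + 1) n r L) s d p c i =
          gammaDim K n (symIdealM K n n r L) s d
            (fun k => if k = s - 1 then p k - 1 else p k)
            (fun k => if k = s - 1 then c k - 1 else c k) i)) := by
  constructor
  · -- Case (i): μ_{n+1} = 0
    intro hmu0
    have hblkn : ¬ blkOf p s n < s := by
      intro hlt
      rw [muOf, if_pos hlt] at hmu0
      exact (hdpos _ hlt).ne' hmu0
    have hset : DeltaCx K (n + 1) (symIdealM K (n + 1) n r L) s d p c =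
        DeltaCx K n (symIdealM K n n r L) s d (fun k => if k = s then p k - 1 else p k) c := by
      ext F
      simp only [DeltaCx, Set.mem_setOf_eq]
      apply and_congr_right
      intro _
      have hlast : muMinus s d p (fun j => c j + eF F j) n = 0 := by
        rw [muMinus, if_neg hblkn]
      have hmin : ∀ t : Fin (n + 1),
          muMinus s d p (fun j => c j + eF F j) ((Fin.last n : Fin (n + 1)) : ℕ) ≤
            muMinus s d p (fun j => c j + eF F j) (t : ℕ) := by
        intro t
        rw [show ((Fin.last n : Fin (n + 1)) : ℕ) = n from rfl, hlast]
        exact Nat.zero_le _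
      have hfun : (fun t : Fin n =>
            muMinus s d p (fun j => c j + eF F j) ((t.castSucc : Fin (n + 1)) : ℕ)) =
          (fun t : Fin n => muMinus s d (fun k => if k = s then p k - 1 else p k)
            (fun j => c j + eF F j) (t : ℕ)) :=
        funext fun t => by
          rw [Fin.coe_castSucc]
          exact (muMinus_shrink_last s d p _ (t : ℕ)).symm
      calc mon K (n + 1) (fun i : Fin (n + 1) =>
              muMinus s d p (fun j => c j + eF F j) (i : ℕ)) ∈ symIdealM K (n + 1) n r L
          ↔ mon K n (fun t : Fin n => muMinus s d p (fun j => c j + eF F j)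
              ((t.castSucc : Fin (n + 1)) : ℕ)) ∈
              symIdealM K n n r L := mon_mem_succ_iff n r L _ hmin
        _ ↔ mon K n (fun t : Fin n => muMinus s d (fun k => if k = s then p k - 1 else p k)
              (fun j => c j + eF F j) (t : ℕ)) ∈ symIdealM K n n r L := by rw [hfun]
    rw [gammaDim, gammaDim, hset]
  · -- Case (ii): μ_{n+1} > 0
    intro hmupos
    have hs : 0 < s := by
      by_contra hcon
      push_neg at hcon
      have hs0 : s = 0 := by omega
      subst hs0
      rw [muOf, if_neg (Nat.not_lt_zero _)] at hmupos
      exact lt_irrefl 0 hmupos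
    have hblkn : blkOf p s n < s := by
      by_contra hcon
      rw [muOf, if_neg hcon] at hmupos
      exact lt_irrefl 0 hmupos
    have hcsle : cumsum p s ≤ n + 1 := hn ▸ cumsum_mono p (Nat.le_succ s)
    have hcsgt : n < cumsum p s := by
      by_contra hcon
      push_neg at hcon
      rw [blkOf_eq_s hcon] at hblkn
      omega
    have hcs : cumsum p s = n + 1 := by omega
    have hps1 : 0 < p (s - 1) := hppos _ (by omega)
    have hcus1 : cumsum p (s - 1) + p (s - 1) = n + 1 := by
      have h1 := cumsum_succ p (s - 1)
      rw [show s - 1 + 1 = s by omega] at h1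
      omega
    have hcsm1 : cumsum p (s - 1) ≤ n := by omega
    have hblkn_eq : blkOf p s n = s - 1 :=
      blkOf_eq (by omega) (by omega)
        (by rw [show s - 1 + 1 = s by omega]; omega)
    have hblk_lt : ∀ i : ℕ, i ≤ n → blkOf p s i < s := fun i hi =>
      blkOf_lt hs (by omega)
    have hdm : ∀ k, k < s → d (s - 1) ≤ d k := by
      intro k hk
      rcases Nat.lt_or_ge k (s - 1) with h | h
      · exact le_of_lt (d_lt_of_lt hd k (s - 1) h (by omega))
      · have hks : k = s - 1 := by omega
        rw [hks]
    have hdm' : ∀ k, k < s → k ≠ s - 1 → d (s - 1) < d k := fun k hk hne =>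
      d_lt_of_lt hd k (s - 1) (by omega) (by omega)
    have hval_ge : ∀ (c' : ℕ → ℕ) (i : ℕ), i ≤ n →
        d (blkOf p s i) - 1 ≤ muMinus s d p c' i := by
      intro c' i hi
      rw [muMinus, if_pos (hblk_lt i hi)]
      split
      · exact le_rfl
      · omega
    have hmin_ge : ∀ (c' : ℕ → ℕ) (i : ℕ), i ≤ n →
        d (s - 1) - 1 ≤ muMinus s d p c' i := by
      intro c' i hi
      have h1 := hval_ge c' i hi
      have h2 := hdm _ (hblk_lt i hi)
      omega
    have hlastval : ∀ c' : ℕ → ℕ, muMinus s d p c' n =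
        if 1 ≤ c' (s - 1) then d (s - 1) - 1 else d (s - 1) := by
      intro c'
      rw [muMinus, if_pos hblkn, hblkn_eq]
      by_cases h1 : 1 ≤ c' (s - 1)
      · rw [if_pos (by omega), if_pos h1]
      · rw [if_neg (by omega), if_neg h1]
    have hmid : ∀ (c' : ℕ → ℕ) (i : ℕ), i < n → blkOf p s i = s - 1 → c' (s - 1) ≤ 1 →
        muMinus s d p c' i = d (s - 1) := by
      intro c' i hi hb hc'
      have hge : cumsum p (s - 1) ≤ i := hb ▸ cumsum_blkOf_le p s i
      rw [muMinus, if_pos (hblk_lt i (by omega)), hb, if_neg (by omega)]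
    constructor
    · -- c_{s-1} = 0 : cone, hence zero homology
      intro hc0
      rw [gammaDim]
      apply rhd0_eq_zero_of_cone K (v := s - 1)
      intro F
      by_cases hvF : s - 1 ∈ F
      · rw [Finset.insert_eq_self.mpr hvF]
      · simp only [DeltaCx, Set.mem_setOf_eq]
        have hsub : F ⊆ Finset.range s ↔ insert (s - 1) F ⊆ Finset.range s := by
          rw [Finset.insert_subset_iff]
          constructor
          · intro h; exact ⟨Finset.mem_range.mpr (by omega), h⟩
          · intro h; exact h.2
        refine and_congr hsub ?_
        have hcF : c (s - 1) + eF F (s - 1) = 0 := by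
          simp only [eF, if_neg hvF]
          omega
        have hcG : c (s - 1) + eF (insert (s - 1) F) (s - 1) = 1 := by
          simp only [eF, if_pos (Finset.mem_insert_self (s - 1) F)]
          omega
        have hminF : ∀ t : Fin (n + 1),
            muMinus s d p (fun j => c j + eF F j) ((Fin.last n : Fin (n + 1)) : ℕ) ≤
              muMinus s d p (fun j => c j + eF F j) (t : ℕ) := by
          intro t
          rw [show ((Fin.last n : Fin (n + 1)) : ℕ) = n from rfl, hlastval,
            if_neg (by omega)]
          have ht : (t : ℕ) ≤ n := by omega
          rcases Nat.lt_or_ge (t : ℕ) n with h1 | h1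
          · by_cases hb : blkOf p s (t : ℕ) = s - 1
            · rw [hmid _ _ h1 hb (by omega)]
            · have h2 := hval_ge (fun j => c j + eF F j) (t : ℕ) ht
              have h3 := hdm' _ (hblk_lt (t : ℕ) ht) hb
              omega
          · have ht' : (t : ℕ) = n := by omega
            rw [ht', hlastval, if_neg (by omega)]
        have hminG : ∀ t : Fin (n + 1),
            muMinus s d p (fun j => c j + eF (insert (s - 1) F) j)
                ((Fin.last n : Fin (n + 1)) : ℕ) ≤
              muMinus s d p (fun j => c j + eF (insert (s - 1) F) j) (t : ℕ) := by
          intro t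
          rw [show ((Fin.last n : Fin (n + 1)) : ℕ) = n from rfl, hlastval,
            if_pos (by omega)]
          exact hmin_ge _ _ (by omega)
        have hcast : (fun t : Fin n => muMinus s d p (fun j => c j + eF F j)
              ((t.castSucc : Fin (n + 1)) : ℕ)) =
            (fun t : Fin n => muMinus s d p (fun j => c j + eF (insert (s - 1) F) j)
              ((t.castSucc : Fin (n + 1)) : ℕ)) := by
          funext t
          rw [Fin.coe_castSucc]
          by_cases hb : blkOf p s (t : ℕ) = s - 1
          · rw [hmid _ _ t.isLt hb (by omega), hmid _ _ t.isLt hb (by omega)]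
          · apply muMinus_congr_c
            have heq : eF F (blkOf p s (t : ℕ)) = eF (insert (s - 1) F) (blkOf p s (t : ℕ)) := by
              simp only [eF, Finset.mem_insert]
              by_cases hmem : blkOf p s (t : ℕ) ∈ F
              · rw [if_pos hmem, if_pos (Or.inr hmem)]
              · rw [if_neg hmem, if_neg (by tauto)]
            simp only [heq]
        calc mon K (n + 1) (fun i : Fin (n + 1) =>
                muMinus s d p (fun j => c j + eF F j) (i : ℕ)) ∈ symIdealM K (n + 1) n r L
            ↔ mon K n (fun t : Fin n => muMinus s d p (fun j => c j + eF F j)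
                ((t.castSucc : Fin (n + 1)) : ℕ)) ∈
                symIdealM K n n r L := mon_mem_succ_iff n r L _ hminF
          _ ↔ mon K n (fun t : Fin n =>
                muMinus s d p (fun j => c j + eF (insert (s - 1) F) j)
                ((t.castSucc : Fin (n + 1)) : ℕ)) ∈
                symIdealM K n n r L := by rw [hcast]
          _ ↔ mon K (n + 1) (fun i : Fin (n + 1) =>
                muMinus s d p (fun j => c j + eF (insert (s - 1) F) j) (i : ℕ)) ∈
                symIdealM K (n + 1) n r L :=
              (mon_mem_succ_iff n r L (fun i : Fin (n + 1) =>
                muMinus s d p (fun j => c j + eF (insert (s - 1) F) j) (i : ℕ)) hminG).symm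
    · -- c_{s-1} ≥ 1 : restriction
      intro hc1
      have hset : DeltaCx K (n + 1) (symIdealM K (n + 1) n r L) s d p c =
          DeltaCx K n (symIdealM K n n r L) s d
            (fun k => if k = s - 1 then p k - 1 else p k)
            (fun k => if k = s - 1 then c k - 1 else c k) := by
        ext F
        simp only [DeltaCx, Set.mem_setOf_eq]
        apply and_congr_right
        intro _
        have hminF : ∀ t : Fin (n + 1),
            muMinus s d p (fun j => c j + eF F j) ((Fin.last n : Fin (n + 1)) : ℕ) ≤
              muMinus s d p (fun j => c j + eF F j) (t : ℕ) := by
          intro t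
          rw [show ((Fin.last n : Fin (n + 1)) : ℕ) = n from rfl, hlastval,
            if_pos (by simp only [eF]; omega)]
          exact hmin_ge _ _ (by omega)
        have hfun : (fun t : Fin n => muMinus s d p (fun j => c j + eF F j)
              ((t.castSucc : Fin (n + 1)) : ℕ)) =
            (fun t : Fin n => muMinus s d (fun k => if k = s - 1 then p k - 1 else p k)
              (fun j => (if j = s - 1 then c j - 1 else c j) + eF F j) (t : ℕ)) := by
          funext t
          rw [Fin.coe_castSucc]
          refine (muMinus_shrink_blk s d p (fun j => c j + eF F j)
            (fun j => (if j = s - 1 then c j - 1 else c j) + eF F j) hs ?_ ?_ hps1 (t : ℕ)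
            (by have := t.isLt; omega)).symm
          · show ((if s - 1 = s - 1 then c (s - 1) - 1 else c (s - 1)) + eF F (s - 1)) + 1
                = c (s - 1) + eF F (s - 1)
            rw [if_pos rfl]
            have := hc (s - 1) (by omega)
            omega
          · intro k hk
            show (if k = s - 1 then c k - 1 else c k) + eF F k = c k + eF F k
            rw [if_neg (by omega)]
        calc mon K (n + 1) (fun i : Fin (n + 1) =>
                muMinus s d p (fun j => c j + eF F j) (i : ℕ)) ∈ symIdealM K (n + 1) n r L
            ↔ mon K n (fun t : Fin n => muMinus s d p (fun j => c j + eF F j)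
                ((t.castSucc : Fin (n + 1)) : ℕ)) ∈
                symIdealM K n n r L := mon_mem_succ_iff n r L _ hminF
          _ ↔ mon K n (fun t : Fin n =>
                muMinus s d (fun k => if k = s - 1 then p k - 1 else p k)
                  (fun j => (if j = s - 1 then c j - 1 else c j) + eF F j) (t : ℕ)) ∈
                symIdealM K n n r L := by rw [hfun]
      rw [gammaDim, gammaDim, hset]
end
end

section
/- Let G be a finite group and k a field whose characteristic is zero or coprime to |G|. Let E be the exterior algebra over k on ∂_1,…,∂_s, Z^s-graded with deg ∂_i = −e_i, and let K be a finite G-equivariant Z^s-complex (a finite Z^s-complex with a k-linear G-action preserving each graded component and commuting with the E-action, G acting trivially on E). If K admits a finite filtration by G-stable Z^s-graded E-submodules whose successive quotients are isomorphic, as G-equivariant graded E-modules, to E(W_i)[d_i] for finite-dimensional k[G]-modules W_i and shifts d_i ∈ Z^s (i = 1,…,r), then K ≅ E(W_1)[d_1] ⊕ ⋯ ⊕ E(W_r)[d_r] as G-equivariant Z^s-graded E-modules. -/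
open scoped BigOperators

noncomputable section
open Classical

section ZsComplex

variable (K : Type) [Field K] (s : ℕ) {M : Type} [AddCommGroup M] [Module K M]

/-- A submodule `N` of a `ℤ^s`-graded module with graded pieces `comp c` is graded
(homogeneous) if it is generated by its homogeneous components. -/
def IsGr (comp : (Fin s → ℤ) → Submodule K M) (N : Submodule K M) : Prop :=
  N = ⨆ c : Fin s → ℤ, N ⊓ comp c

/-- The subquotient `A/B` (for graded `E`-submodules `B ≤ A` of a `ℤ^s`-complex with
graded pieces `comp` and differentials `D i` of degree `-e_i`) is a **Boolean**
`ℤ^s`-complex: its support is a translate `d' + {0,1}^s` of the unit box, and each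
`∂_i` induces an isomorphism between any two nonzero components of `A/B`.  (For a
`G`-equivariant complex this says exactly that `A/B ≅ E(W)[d]` as `G`-equivariant graded
`E`-modules, where `W` is the `k[G]`-module sitting in the top corner of the box.) -/
def IsBooleanSubq (comp : (Fin s → ℤ) → Submodule K M) (D : Fin s → M →ₗ[K] M)
    (B A : Submodule K M) : Prop :=
  ∃ d' : Fin s → ℤ,
    (∀ c : Fin s → ℤ,
      (¬ A ⊓ comp c ≤ B) ↔ ∃ t : Fin s → Bool, c = d' + fun j => if t j then 1 else 0) ∧
    (∀ (i : Fin s) (c : Fin s → ℤ), (¬ A ⊓ comp c ≤ B) →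
      (¬ A ⊓ comp (c - Pi.single i 1) ≤ B) →
      (∀ x ∈ A ⊓ comp c, D i x ∈ B → x ∈ B) ∧
      (∀ y ∈ A ⊓ comp (c - Pi.single i 1), ∃ x ∈ A ⊓ comp c, y - D i x ∈ B))

end ZsComplex



open scoped BigOperators


section AuxLemmas

variable {K : Type} [Field K] {s : ℕ} {M : Type} [AddCommGroup M] [Module K M]

/-- Composition of the differentials along a list of indices. -/
def Dlist (D : Fin s → M →ₗ[K] M) : List (Fin s) → (M →ₗ[K] M)
  | [] => LinearMap.id
  | i :: l => D i ∘ₗ Dlist D l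

lemma map_neg_eq (f : M →ₗ[K] M) (W : Submodule K M) : W.map (-f) = W.map f := by
  ext x
  simp only [Submodule.mem_map, LinearMap.neg_apply]
  constructor
  · rintro ⟨w, hw, rfl⟩; exact ⟨-w, W.neg_mem hw, by simp⟩
  · rintro ⟨w, hw, rfl⟩; exact ⟨-w, W.neg_mem hw, by simp⟩

lemma Dlist_perm (D : Fin s → M →ₗ[K] M)
    (hanti : ∀ i j, i ≠ j → D i ∘ₗ D j + D j ∘ₗ D i = 0)
    {l l' : List (Fin s)} (h : l.Perm l') :
    Dlist D l = Dlist D l' ∨ Dlist D l = -Dlist D l' := by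
  induction h with
  | nil => exact Or.inl rfl
  | cons x h ih =>
      rcases ih with h1 | h1
      · exact Or.inl (by rw [Dlist, Dlist, h1])
      · refine Or.inr ?_
        ext m
        simp only [Dlist, LinearMap.comp_apply, LinearMap.neg_apply, h1, map_neg]
  | swap x y l =>
      by_cases hxy : x = y
      · subst hxy; exact Or.inl rfl
      · refine Or.inr ?_
        ext m
        have h0 := LinearMap.congr_fun (hanti x y hxy) (Dlist D l m)
        simp only [LinearMap.add_apply, LinearMap.comp_apply, LinearMap.zero_apply] at h0
        simp only [Dlist, LinearMap.comp_apply, LinearMap.neg_apply]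
        rw [eq_neg_iff_add_eq_zero, add_comm]
        exact h0
  | trans h1 h2 ih1 ih2 =>
      rcases ih1 with a | a <;> rcases ih2 with b | b
      · exact Or.inl (a.trans b)
      · exact Or.inr (a.trans b)
      · exact Or.inr (by rw [a, b])
      · exact Or.inl (by rw [a, b, neg_neg])

lemma Dlist_map_perm (D : Fin s → M →ₗ[K] M)
    (hanti : ∀ i j, i ≠ j → D i ∘ₗ D j + D j ∘ₗ D i = 0)
    {l l' : List (Fin s)} (h : l.Perm l') (W : Submodule K M) :
    W.map (Dlist D l) = W.map (Dlist D l') := by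
  rcases Dlist_perm D hanti h with h1 | h1
  · rw [h1]
  · rw [h1, map_neg_eq]

lemma Dlist_dup (D : Fin s → M →ₗ[K] M)
    (hDsq : ∀ i, D i ∘ₗ D i = 0)
    (hanti : ∀ i j, i ≠ j → D i ∘ₗ D j + D j ∘ₗ D i = 0)
    {l : List (Fin s)} (h : ¬ l.Nodup) : Dlist D l = 0 := by
  rw [List.nodup_iff_count_le_one] at h
  push_neg at h
  obtain ⟨a, ha⟩ := h
  have hal : a ∈ l := by
    rw [← List.count_pos_iff]
    omega
  have h1 : l.Perm (a :: l.erase a) := List.perm_cons_erase hal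
  have hal1 : a ∈ l.erase a := by
    rw [← List.count_pos_iff]
    have : List.count a (l.erase a) = List.count a l - 1 := List.count_erase_self
    omega
  have h2 : l.Perm (a :: a :: (l.erase a).erase a) :=
    h1.trans ((List.perm_cons_erase hal1).cons a)
  have h4 : Dlist D (a :: a :: (l.erase a).erase a) = 0 := by
    ext m
    have := LinearMap.congr_fun (hDsq a) (Dlist D ((l.erase a).erase a) m)
    simpa [Dlist] using this
  rcases Dlist_perm D hanti h2 with h3 | h3
  · rw [h3, h4]
  · rw [h3, h4, neg_zero]

lemma Dlist_grade (comp : (Fin s → ℤ) → Submodule K M) (D : Fin s → M →ₗ[K] M)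
    (hDgr : ∀ (i : Fin s) (c : Fin s → ℤ), (comp c).map (D i) ≤ comp (c - Pi.single i 1)) :
    ∀ (l : List (Fin s)) (c : Fin s → ℤ),
      (comp c).map (Dlist D l) ≤ comp (fun j => c j - l.count j) := by
  intro l
  induction l with
  | nil =>
      intro c
      rw [Dlist, Submodule.map_id]
      refine le_of_eq ?_
      congr 1
      funext j
      simp
  | cons i l ih =>
      intro c
      rw [Dlist, Submodule.map_comp]
      refine le_trans (Submodule.map_mono (ih c)) (le_trans (hDgr i _) (le_of_eq ?_))
      congr 1
      funext j
      simp only [Pi.sub_apply, Pi.single_apply, List.count_cons, beq_iff_eq]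
      by_cases hji : j = i
      · subst hji; simp; ring
      · simp [hji, Ne.symm hji]

lemma Dlist_stab (D : Fin s → M →ₗ[K] M) (X : Submodule K M)
    (hX : ∀ i, X.map (D i) ≤ X) : ∀ l, X.map (Dlist D l) ≤ X := by
  intro l
  induction l with
  | nil => rw [Dlist, Submodule.map_id]
  | cons i l ih =>
      rw [Dlist, Submodule.map_comp]
      exact le_trans (Submodule.map_mono ih) (hX i)

lemma Dlist_comm (D : Fin s → M →ₗ[K] M) (g : M →ₗ[K] M)
    (hg : ∀ i, g ∘ₗ D i = D i ∘ₗ g) : ∀ l, g ∘ₗ Dlist D l = Dlist D l ∘ₗ g := by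
  intro l
  induction l with
  | nil => ext m; simp [Dlist]
  | cons i l ih =>
      ext m
      have h1 := LinearMap.congr_fun (hg i) (Dlist D l m)
      have h2 := LinearMap.congr_fun ih m
      simp only [Dlist, LinearMap.comp_apply] at *
      rw [h1, h2]

lemma sum_zero_of_indep {ι : Type} (p : ι → Submodule K M) (hind : iSupIndep p)
    (S : Finset ι) (m : ι → M) (hm : ∀ c ∈ S, m c ∈ p c) (h : ∑ c ∈ S, m c = 0) :
    ∀ c ∈ S, m c = 0 := by
  intro c hc
  have h1 : m c + ∑ c' ∈ S.erase c, m c' = 0 := by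
    rw [Finset.add_sum_erase S m hc]; exact h
  have h2 : m c ∈ (⨆ (c') (_ : c' ≠ c), p c') := by
    rw [eq_neg_of_add_eq_zero_left h1]
    refine neg_mem (Submodule.sum_mem _ fun c' hc' => ?_)
    have hne : c' ≠ c := (Finset.mem_erase.mp hc').1
    exact Submodule.mem_iSup_of_mem c'
      (Submodule.mem_iSup_of_mem hne (hm c' (Finset.mem_erase.mp hc').2))
  exact Submodule.disjoint_def.mp (hind c) _ (hm c hc) h2

/-- degree of a corner of the box -/
def cdeg {s : ℕ} (d' : Fin s → ℤ) (t : Fin s → Bool) : Fin s → ℤ :=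
  d' + fun j => if t j then 1 else 0

/-- the (sorted) list of indices where `t` is `false` -/
def falseList (s : ℕ) (t : Fin s → Bool) : List (Fin s) :=
  (List.finRange s).filter (fun i => !(t i))

lemma mem_falseList {s : ℕ} {t : Fin s → Bool} {i : Fin s} :
    i ∈ falseList s t ↔ t i = false := by
  simp [falseList, List.mem_filter, List.mem_finRange]

lemma nodup_falseList {s : ℕ} (t : Fin s → Bool) : (falseList s t).Nodup :=
  (List.nodup_finRange s).filter _

lemma cdeg_inj {s : ℕ} {d' : Fin s → ℤ} {t t' : Fin s → Bool}
    (h : cdeg d' t = cdeg d' t') : t = t' := by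
  funext j
  have h2 : (if t j then (1:ℤ) else 0) = (if t' j then 1 else 0) := by
    have := congrFun h j
    simpa [cdeg] using this
  cases htj : t j <;> cases ht'j : t' j <;> simp [htj, ht'j] at h2 <;> rfl

lemma falseList_perm_update {s : ℕ} {t : Fin s → Bool} {i : Fin s} (hti : t i = false) :
    (falseList s t).Perm (i :: falseList s (Function.update t i true)) := by
  have hnodup2 : (i :: falseList s (Function.update t i true)).Nodup := by
    rw [List.nodup_cons]
    refine ⟨fun hmem => ?_, nodup_falseList _⟩
    rw [mem_falseList] at hmem
    simp [Function.update_self] at hmem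
  rw [List.perm_ext_iff_of_nodup (nodup_falseList t) hnodup2]
  intro a
  rw [List.mem_cons, mem_falseList, mem_falseList]
  by_cases ha : a = i
  · subst ha; simp [hti]
  · simp [Function.update_of_ne ha, ha]

lemma cdeg_update_sub {s : ℕ} (d' : Fin s → ℤ) {t : Fin s → Bool} {i : Fin s}
    (hti : t i = false) :
    cdeg d' (Function.update t i true) - Pi.single i 1 = cdeg d' t := by
  funext j
  simp only [cdeg, Pi.sub_apply, Pi.add_apply, Pi.single_apply]
  by_cases hj : j = i
  · subst hj; simp [Function.update_self, hti]
  · simp [Function.update_of_ne hj, hj]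

lemma count_falseList {s : ℕ} (t : Fin s → Bool) (j : Fin s) :
    (falseList s t).count j = if t j then 0 else 1 := by
  by_cases h : t j = true
  · rw [if_pos h]
    exact List.count_eq_zero_of_not_mem (fun hm => by
      rw [mem_falseList] at hm; rw [hm] at h; exact Bool.false_ne_true h)
  · rw [if_neg h]
    exact List.count_eq_one_of_mem (nodup_falseList t)
      (mem_falseList.mpr (Bool.eq_false_iff.mpr (by simpa using h)))

end AuxLemmas

section MaschkeAux

variable {K : Type} [Field K] {G : Type} [Group G] [Fintype G]
  {M : Type} [AddCommGroup M] [Module K M]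

lemma maschke_complement (hcard : (Fintype.card G : K) ≠ 0)
    (act : G →* Module.End K M) (V B : Submodule K M)
    (hVact : ∀ g, V.map (act g) ≤ V) (hBact : ∀ g, B.map (act g) ≤ B) :
    ∃ W : Submodule K M, W ≤ V ∧ (∀ g, W.map (act g) ≤ W) ∧
      (∀ x ∈ W, x ∈ B → x = 0) ∧ (∀ v ∈ V, ∃ b ∈ B, ∃ w ∈ W, v = b + w) := by
  classical
  have hVg : ∀ g : G, ∀ x ∈ V, act g x ∈ V := fun g x hx => hVact g ⟨x, hx, rfl⟩
  set ρ : G → (↥V →ₗ[K] ↥V) := fun g => (act g).restrict (hVg g) with hρdef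
  have hρc : ∀ (g : G) (x : ↥V), ((ρ g x : M)) = act g ↑x := fun g x => rfl
  have hρmul : ∀ (a b : G) (x : ↥V), ρ a (ρ b x) = ρ (a * b) x := by
    intro a b x
    apply Subtype.ext
    rw [hρc, hρc, hρc, map_mul]
    rfl
  have hρρ : ∀ (g : G) (x : ↥V), ρ g (ρ g⁻¹ x) = x := by
    intro g x
    rw [hρmul, mul_inv_cancel]
    apply Subtype.ext
    rw [hρc, map_one]
    rfl
  set B' : Submodule K ↥V := B.comap V.subtype with hB'def
  have hB'mem : ∀ x : ↥V, x ∈ B' ↔ (x : M) ∈ B := fun x => Iff.rfl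
  obtain ⟨C, hC⟩ := Submodule.exists_isCompl B'
  set π₀ : ↥V →ₗ[K] ↥V := B'.subtype ∘ₗ (B'.linearProjOfIsCompl C hC) with hπ₀def
  have hπ₀B : ∀ x : ↥V, π₀ x ∈ B' := fun x => Submodule.coe_mem _
  have hπ₀id : ∀ x ∈ B', π₀ x = x := by
    intro x hx
    have h2 : (B'.linearProjOfIsCompl C hC) x = ⟨x, hx⟩ :=
      Submodule.linearProjOfIsCompl_apply_left hC ⟨x, hx⟩
    show B'.subtype ((B'.linearProjOfIsCompl C hC) x) = x
    rw [h2]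
    rfl
  have hρB' : ∀ (g : G) (x : ↥V), x ∈ B' → ρ g x ∈ B' := by
    intro g x hx
    rw [hB'mem, hρc]
    exact hBact g ⟨x, hx, rfl⟩
  set π : ↥V →ₗ[K] ↥V := (Fintype.card G : K)⁻¹ • ∑ g : G, (ρ g ∘ₗ π₀ ∘ₗ ρ g⁻¹) with hπdef
  have hπ_apply : ∀ x : ↥V, π x = (Fintype.card G : K)⁻¹ • ∑ g : G, ρ g (π₀ (ρ g⁻¹ x)) := by
    intro x
    rw [hπdef]
    simp [LinearMap.sum_apply, LinearMap.smul_apply, LinearMap.comp_apply]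
  have hπB : ∀ x : ↥V, π x ∈ B' := by
    intro x
    rw [hπ_apply]
    exact Submodule.smul_mem _ _ (Submodule.sum_mem _ fun g _ => hρB' g _ (hπ₀B _))
  have hπid : ∀ x ∈ B', π x = x := by
    intro x hx
    rw [hπ_apply]
    have heach : ∀ g : G, ρ g (π₀ (ρ g⁻¹ x)) = x := fun g => by
      rw [hπ₀id _ (hρB' g⁻¹ x hx), hρρ]
    rw [Finset.sum_congr rfl fun g _ => heach g, Finset.sum_const, Finset.card_univ,
      ← Nat.cast_smul_eq_nsmul K, smul_smul, inv_mul_cancel₀ hcard, one_smul]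
  have hπg : ∀ (h : G) (x : ↥V), π (ρ h x) = ρ h (π x) := by
    intro h x
    rw [hπ_apply, hπ_apply, map_smul, map_sum]
    congr 1
    refine Fintype.sum_equiv (Equiv.mulLeft h⁻¹)
      (fun g => ρ g (π₀ (ρ g⁻¹ (ρ h x)))) (fun g => ρ h (ρ g (π₀ (ρ g⁻¹ x)))) (fun g => ?_)
    simp only [Equiv.coe_mulLeft]
    have e1 : h * (h⁻¹ * g) = g := by group
    have e2 : (h⁻¹ * g)⁻¹ = g⁻¹ * h := by simp [mul_inv_rev]
    rw [hρmul g⁻¹ h, hρmul h (h⁻¹ * g), e1, e2]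
  refine ⟨(LinearMap.ker π).map V.subtype, ?_, ?_, ?_, ?_⟩
  · rintro x ⟨v, hv, rfl⟩; exact v.2
  · rintro g x ⟨y, ⟨v, hv, rfl⟩, rfl⟩
    refine ⟨ρ g v, ?_, rfl⟩
    simp only [SetLike.mem_coe, LinearMap.mem_ker] at hv ⊢
    rw [hπg g v, hv, map_zero]
  · rintro x ⟨v, hv, rfl⟩ hxB
    have h0 : π v = 0 := LinearMap.mem_ker.mp hv
    have h1 : π v = v := hπid v ((hB'mem v).mpr hxB)
    show (v : M) = 0
    rw [← h1, h0]
    simp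
  · intro v hv
    have hker : (⟨v, hv⟩ : ↥V) - π ⟨v, hv⟩ ∈ LinearMap.ker π := by
      rw [LinearMap.mem_ker, map_sub, hπid _ (hπB _), sub_self]
    refine ⟨↑(π ⟨v, hv⟩), (hB'mem _).mp (hπB ⟨v, hv⟩),
      ↑((⟨v, hv⟩ : ↥V) - π ⟨v, hv⟩), Submodule.mem_map_of_mem hker, ?_⟩
    rw [Submodule.coe_sub]
    simp

end MaschkeAux


section StepLemma

variable {K : Type} [Field K] {s : ℕ} {G : Type} [Group G] [Fintype G]
  {M : Type} [AddCommGroup M] [Module K M]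

lemma step_lemma (hcard : (Fintype.card G : K) ≠ 0)
    (comp : (Fin s → ℤ) → Submodule K M) (D : Fin s → M →ₗ[K] M)
    (act : G →* Module.End K M)
    (hind : iSupIndep comp)
    (hDgr : ∀ (i : Fin s) (c : Fin s → ℤ), (comp c).map (D i) ≤ comp (c - Pi.single i 1))
    (hDsq : ∀ i, D i ∘ₗ D i = 0)
    (hanti : ∀ i j, i ≠ j → D i ∘ₗ D j + D j ∘ₗ D i = 0)
    (hactgr : ∀ (g : G) (c : Fin s → ℤ), (comp c).map (act g) ≤ comp c)
    (hactD : ∀ (g : G) (i : Fin s), act g ∘ₗ D i = D i ∘ₗ act g)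
    (B A : Submodule K M) (hBA : B ≤ A)
    (hAgr : IsGr K s comp A) (hBgr : IsGr K s comp B)
    (hAD : ∀ i, A.map (D i) ≤ A) (hBD : ∀ i, B.map (D i) ≤ B)
    (hAact : ∀ g, A.map (act g) ≤ A) (hBact : ∀ g, B.map (act g) ≤ B)
    (hbool : IsBooleanSubq K s comp D B A) :
    ∃ P : Submodule K M, IsGr K s comp P ∧ (∀ i, P.map (D i) ≤ P) ∧
      (∀ g, P.map (act g) ≤ P) ∧ P ⊓ B = ⊥ ∧ P ⊔ B = A := by
  classical
  obtain ⟨d', hsupp, hiso⟩ := hbool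
  have hAgr' : A = ⨆ c, A ⊓ comp c := hAgr
  have hBgr' : B = ⨆ c, B ⊓ comp c := hBgr
  have hbox : ∀ t : Fin s → Bool, ¬ A ⊓ comp (cdeg d' t) ≤ B :=
    fun t => (hsupp _).mpr ⟨t, rfl⟩
  -- the top-corner component
  have hVact : ∀ g, (A ⊓ comp (cdeg d' fun _ => true)).map (act g) ≤
      A ⊓ comp (cdeg d' fun _ => true) := by
    intro g
    refine le_trans (le_trans (Submodule.map_inf_le _) ?_) le_rfl
    exact inf_le_inf (hAact g) (hactgr g _)
  obtain ⟨W, hWV, hWact, hWB, hWsum⟩ :=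
    maschke_complement hcard act (A ⊓ comp (cdeg d' fun _ => true)) B hVact hBact
  -- the box family
  set p : (Fin s → Bool) → Submodule K M := fun t => W.map (Dlist D (falseList s t)) with hpdef
  have hpW : p (fun _ => true) = W := by
    have h0 : falseList s (fun _ => true) = [] := by simp [falseList]
    rw [hpdef]
    simp only [h0, Dlist, Submodule.map_id]
  have hp_comp : ∀ t, p t ≤ comp (cdeg d' t) := by
    intro t
    have h1 : W ≤ comp (cdeg d' (fun _ => true)) := le_trans hWV inf_le_right
    refine le_trans (Submodule.map_mono h1)
      (le_trans (Dlist_grade comp D hDgr _ _) (le_of_eq ?_))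
    congr 1
    funext j
    rw [count_falseList]
    by_cases h : t j = true <;> simp [cdeg, h] <;> ring
  have hp_A : ∀ t, p t ≤ A :=
    fun t => le_trans (Submodule.map_mono (le_trans hWV inf_le_left)) (Dlist_stab D A hAD _)
  have hp_rec : ∀ (t : Fin s → Bool) (i : Fin s), t i = false →
      p t = (p (Function.update t i true)).map (D i) := by
    intro t i hti
    have hperm := falseList_perm_update hti
    rw [hpdef]
    simp only
    rw [Dlist_map_perm D hanti hperm W,
      show Dlist D (i :: falseList s (Function.update t i true))
        = D i ∘ₗ Dlist D (falseList s (Function.update t i true)) from rfl,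
      Submodule.map_comp]
  have hp_D : ∀ (t : Fin s → Bool) (i : Fin s), (p t).map (D i) ≤ ⨆ t', p t' := by
    intro t i
    cases hti : t i with
    | false =>
        have hdup : ¬ (i :: falseList s t).Nodup := by
          rw [List.nodup_cons]
          push_neg
          intro h
          exact absurd (mem_falseList.mpr hti) h
        have h0 : D i ∘ₗ Dlist D (falseList s t) = 0 := by
          rw [show D i ∘ₗ Dlist D (falseList s t) = Dlist D (i :: falseList s t) from rfl]
          exact Dlist_dup D hDsq hanti hdup
        calc (p t).map (D i) = W.map (D i ∘ₗ Dlist D (falseList s t)) :=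
              (Submodule.map_comp _ _ _).symm
          _ = W.map (0 : M →ₗ[K] M) := by rw [h0]
          _ = ⊥ := Submodule.map_zero W
          _ ≤ _ := bot_le
    | true =>
        have h1 : (Function.update t i false) i = false := by simp
        have h2 : Function.update (Function.update t i false) i true = t := by
          funext j
          by_cases hj : j = i
          · subst hj; simp [hti]
          · simp [Function.update_of_ne hj]
        have h3 := hp_rec (Function.update t i false) i h1
        rw [h2] at h3
        rw [← h3]
        exact le_iSup p (Function.update t i false)
  -- injectivity of the box down from the corner
  have hp_B : ∀ (n : ℕ) (t : Fin s → Bool), (falseList s t).length = n →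
      ∀ x ∈ p t, x ∈ B → x = 0 := by
    intro n
    induction n with
    | zero =>
        intro t ht x hx hxB
        have htt : t = fun _ => true := by
          funext j
          by_contra hj
          have hjf : t j = false := by
            cases hjq : t j
            · rfl
            · exact absurd hjq hj
          have hmem : j ∈ falseList s t := mem_falseList.mpr hjf
          rw [List.length_eq_zero_iff.mp ht] at hmem
          simp at hmem
        rw [htt, hpW] at hx
        exact hWB x hx hxB
    | succ n ih =>
        intro t ht x hx hxB
        have hne : falseList s t ≠ [] := by
          intro h; rw [h] at ht; simp at ht
        obtain ⟨i, l0, hl⟩ := List.exists_cons_of_ne_nil hne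
        have hti : t i = false := mem_falseList.mp (by rw [hl]; exact List.mem_cons_self)
        have hlen : (falseList s (Function.update t i true)).length = n := by
          have := (falseList_perm_update hti).length_eq
          rw [ht] at this
          simp only [List.length_cons] at this
          omega
        rw [hp_rec t i hti] at hx
        obtain ⟨y, hy, rfl⟩ := hx
        have hyA : y ∈ A ⊓ comp (cdeg d' (Function.update t i true)) :=
          ⟨hp_A _ hy, hp_comp _ hy⟩
        have hsub : cdeg d' (Function.update t i true) - Pi.single i 1 = cdeg d' t :=
          cdeg_update_sub d' hti
        have hbox2 : ¬ A ⊓ comp (cdeg d' (Function.update t i true) - Pi.single i 1) ≤ B := by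
          rw [hsub]; exact hbox t
        have hinj := (hiso i (cdeg d' (Function.update t i true))
          (hbox _) hbox2).1 y hyA hxB
        rw [ih _ hlen y hy hinj, map_zero]
  -- surjectivity of the box down from the corner
  have hp_surj : ∀ (n : ℕ) (t : Fin s → Bool), (falseList s t).length = n →
      A ⊓ comp (cdeg d' t) ≤ B ⊔ p t := by
    intro n
    induction n with
    | zero =>
        intro t ht v hv
        have htt : t = fun _ => true := by
          funext j
          by_contra hj
          have hjf : t j = false := by
            cases hjq : t j
            · rfl
            · exact absurd hjq hj
          have hmem : j ∈ falseList s t := mem_falseList.mpr hjf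
          rw [List.length_eq_zero_iff.mp ht] at hmem
          simp at hmem
        rw [htt] at hv ⊢
        rw [hpW]
        obtain ⟨b, hb, w, hw, rfl⟩ := hWsum v hv
        exact Submodule.add_mem_sup hb hw
    | succ n ih =>
        intro t ht y hy
        have hne : falseList s t ≠ [] := by
          intro h; rw [h] at ht; simp at ht
        obtain ⟨i, l0, hl⟩ := List.exists_cons_of_ne_nil hne
        have hti : t i = false := mem_falseList.mp (by rw [hl]; exact List.mem_cons_self)
        have hlen : (falseList s (Function.update t i true)).length = n := by
          have := (falseList_perm_update hti).length_eq
          rw [ht] at this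
          simp only [List.length_cons] at this
          omega
        have hsub : cdeg d' (Function.update t i true) - Pi.single i 1 = cdeg d' t :=
          cdeg_update_sub d' hti
        have hbox2 : ¬ A ⊓ comp (cdeg d' (Function.update t i true) - Pi.single i 1) ≤ B := by
          rw [hsub]; exact hbox t
        obtain ⟨x, hxA, hxB⟩ := (hiso i (cdeg d' (Function.update t i true))
          (hbox _) hbox2).2 y (by rw [hsub]; exact hy)
        obtain ⟨b, hb, w, hw, hbw⟩ := Submodule.mem_sup.mp (ih _ hlen hxA)
        have hDx : D i x = D i b + D i w := by rw [← hbw, map_add]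
        have hDw : D i w ∈ p t := by
          rw [hp_rec t i hti]
          exact ⟨w, hw, rfl⟩
        have hDb : D i b ∈ B := hBD i ⟨b, hb, rfl⟩
        have hyx : y = ((y - D i x) + D i b) + D i w := by rw [hDx]; abel
        rw [hyx]
        exact Submodule.add_mem_sup (B.add_mem hxB hDb) hDw
  refine ⟨⨆ t, p t, ?_, ?_, ?_, ?_, ?_⟩
  · -- graded
    show (⨆ t, p t) = ⨆ c, (⨆ t, p t) ⊓ comp c
    apply le_antisymm
    · refine iSup_le fun t => ?_
      exact le_trans (le_inf (le_iSup p t) (hp_comp t))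
        (le_iSup (fun c => (⨆ t', p t') ⊓ comp c) (cdeg d' t))
    · exact iSup_le fun c => inf_le_left
  · -- D-stable
    intro i
    rw [Submodule.map_iSup]
    exact iSup_le (fun t => hp_D t i)
  · -- G-stable
    intro g
    rw [Submodule.map_iSup]
    refine iSup_le fun t => ?_
    have h1 : (p t).map (act g) = (W.map (act g)).map (Dlist D (falseList s t)) := by
      rw [hpdef]
      simp only
      rw [← Submodule.map_comp, ← Submodule.map_comp,
        Dlist_comm D (act g) (fun i => hactD g i)]
    rw [h1]
    exact le_trans (Submodule.map_mono (hWact g)) (le_iSup p t)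
  · -- disjoint from B
    apply eq_bot_iff.mpr
    rintro x ⟨hxP, hxB⟩
    obtain ⟨f, hf, hfsum⟩ := (Submodule.mem_iSup_iff_exists_finsupp p x).mp hxP
    have hxB' : x ∈ ⨆ c, B ⊓ comp c := by rw [← hBgr']; exact hxB
    obtain ⟨gg, hgg, hggsum⟩ :=
      (Submodule.mem_iSup_iff_exists_finsupp (fun c => B ⊓ comp c) x).mp hxB'
    set S : Finset (Fin s → ℤ) := f.support.image (cdeg d') ∪ gg.support with hS
    set m : (Fin s → ℤ) → M :=
      fun c => (∑ t ∈ f.support.filter (fun t => cdeg d' t = c), f t) - gg c with hm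
    have hmmem : ∀ c ∈ S, m c ∈ comp c := by
      intro c hc
      refine sub_mem (Submodule.sum_mem _ fun t htc => ?_) ((hgg c).2)
      have hceq := (Finset.mem_filter.mp htc).2
      exact hceq ▸ hp_comp t (hf t)
    have hfsum' : ∑ t ∈ f.support, f t = x := hfsum
    have hggsum' : ∑ c ∈ gg.support, gg c = x := hggsum
    have hmsum : ∑ c ∈ S, m c = 0 := by
      rw [hm]
      rw [Finset.sum_sub_distrib]
      have e1 : ∑ c ∈ S, ∑ t ∈ f.support.filter (fun t => cdeg d' t = c), f t
          = ∑ t ∈ f.support, f t :=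
        Finset.sum_fiberwise_of_maps_to
          (fun t ht => Finset.mem_union_left _ (Finset.mem_image_of_mem _ ht)) _
      have e2 : ∑ c ∈ S, gg c = ∑ c ∈ gg.support, gg c :=
        (Finset.sum_subset Finset.subset_union_right
          (fun c _ hc => Finsupp.notMem_support_iff.mp hc)).symm
      rw [e1, e2, hfsum', hggsum', sub_self]
    have hm0 := sum_zero_of_indep comp hind S m hmmem hmsum
    have hf0 : ∀ t, f t = 0 := by
      intro t
      by_cases ht : t ∈ f.support
      · have hcS : cdeg d' t ∈ S := Finset.mem_union_left _ (Finset.mem_image_of_mem _ ht)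
        have hfilter : f.support.filter (fun t' => cdeg d' t' = cdeg d' t) = {t} := by
          apply Finset.ext
          intro t'
          simp only [Finset.mem_filter, Finset.mem_singleton]
          constructor
          · rintro ⟨_, heq⟩; exact cdeg_inj heq
          · rintro rfl; exact ⟨ht, rfl⟩
        have h' := hm0 _ hcS
        rw [hm] at h'
        simp only at h'
        rw [hfilter, Finset.sum_singleton] at h'
        have hgt : f t = gg (cdeg d' t) := sub_eq_zero.mp h'
        have hftB : f t ∈ B := hgt ▸ (hgg _).1
        exact hp_B (falseList s t).length t rfl (f t) (hf t) hftB
      · exact Finsupp.notMem_support_iff.mp ht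
    show x ∈ (⊥ : Submodule K M)
    rw [Submodule.mem_bot, ← hfsum']
    exact Finset.sum_eq_zero fun t _ => hf0 t
  · -- sup with B is A
    apply le_antisymm
    · exact sup_le (iSup_le hp_A) hBA
    · conv_lhs => rw [hAgr']
      refine iSup_le fun c => ?_
      by_cases hc : A ⊓ comp c ≤ B
      · exact le_trans hc le_sup_right
      · obtain ⟨t, rfl⟩ := (hsupp c).mp hc
        refine le_trans (hp_surj _ t rfl) (sup_le le_sup_right ?_)
        exact le_trans (le_iSup p t) le_sup_left


end StepLemma


/-- Let `G` be a finite group and `k` a field of characteristic zero or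
coprime to `|G|`.  Let `K` be a finite `G`-equivariant `ℤ^s`-complex (an internally
`ℤ^s`-graded module `M` with pieces `comp c`, anticommuting square-zero operators `D i`
of degree `-e_i`, and a `G`-action `act` commuting with everything).  If `K` admits a
finite filtration `⊥ = N_0 ≤ ⋯ ≤ N_r = ⊤` by `G`-stable graded `E`-submodules whose
successive quotients are Boolean (i.e. isomorphic as `G`-equivariant graded `E`-modules
to `E(W_j)[d_j]` for `k[G]`-modules `W_j`), then `K` is isomorphic, as a `G`-equivariant
`ℤ^s`-graded `E`-module, to direct sum of those quotients: there are `G`-stable graded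
`E`-submodules `P_j` with `P_j ⊕ N_j = N_{j+1}` and `M = P_1 ⊕ ⋯ ⊕ P_r` internally. -/
theorem statement_19 (K : Type) [Field K] (s r : ℕ)
    (G : Type) [Group G] [Fintype G]
    (hchar : ringChar K = 0 ∨ Nat.Coprime (ringChar K) (Fintype.card G))
    (M : Type) [AddCommGroup M] [Module K M]
    (comp : (Fin s → ℤ) → Submodule K M) (D : Fin s → M →ₗ[K] M)
    (act : G →* Module.End K M)
    (hdecomp : DirectSum.IsInternal comp)
    (hfd : ∀ c, FiniteDimensional K (comp c))
    (hfin : {c | comp c ≠ ⊥}.Finite)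
    (hDgr : ∀ (i : Fin s) (c : Fin s → ℤ), (comp c).map (D i) ≤ comp (c - Pi.single i 1))
    (hDsq : ∀ i, D i ∘ₗ D i = 0)
    (hanti : ∀ i j, i ≠ j → D i ∘ₗ D j + D j ∘ₗ D i = 0)
    (hactgr : ∀ (g : G) (c : Fin s → ℤ), (comp c).map (act g) ≤ comp c)
    (hactD : ∀ (g : G) (i : Fin s), act g ∘ₗ D i = D i ∘ₗ act g)
    (N : Fin (r + 1) → Submodule K M) (hmono : Monotone N)
    (hbot : N 0 = ⊥) (htop : N (Fin.last r) = ⊤)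
    (hNgr : ∀ j, IsGr K s comp (N j))
    (hND : ∀ j i, (N j).map (D i) ≤ N j)
    (hNact : ∀ j g, (N j).map (act g) ≤ N j)
    (hBool : ∀ j : Fin r, IsBooleanSubq K s comp D (N j.castSucc) (N j.succ)) :
    ∃ P : Fin r → Submodule K M,
      (∀ j : Fin r, IsGr K s comp (P j) ∧ (∀ i, (P j).map (D i) ≤ P j) ∧
        (∀ g, (P j).map (act g) ≤ P j) ∧
        P j ⊓ N j.castSucc = ⊥ ∧ P j ⊔ N j.castSucc = N j.succ) ∧
      DirectSum.IsInternal P := by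
  classical
  have hcard : (Fintype.card G : K) ≠ 0 := by
    intro h
    have hdvd : ringChar K ∣ Fintype.card G := (ringChar.spec K _).mp h
    rcases hchar with h0 | hcop
    · rw [h0] at hdvd
      exact Fintype.card_ne_zero (zero_dvd_iff.mp hdvd)
    · have h1 : ringChar K ∣ 1 := by
        have h2 := Nat.dvd_gcd (dvd_refl (ringChar K)) hdvd
        rwa [Nat.Coprime.gcd_eq_one hcop] at h2
      haveI := ringChar.charP K
      exact CharP.char_ne_one K (ringChar K) (Nat.dvd_one.mp h1)
  have hind := hdecomp.submodule_iSupIndep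
  have hstep : ∀ j : Fin r, ∃ P : Submodule K M, IsGr K s comp P ∧
      (∀ i, P.map (D i) ≤ P) ∧ (∀ g, P.map (act g) ≤ P) ∧
      P ⊓ N j.castSucc = ⊥ ∧ P ⊔ N j.castSucc = N j.succ := by
    intro j
    exact step_lemma hcard comp D act hind hDgr hDsq hanti hactgr hactD
      (N j.castSucc) (N j.succ) (hmono (Fin.castSucc_le_succ j))
      (hNgr j.succ) (hNgr j.castSucc) (hND _) (hND _) (hNact _) (hNact _) (hBool j)
  choose P hgr hD hact' hinf hsup using hstep
  refine ⟨P, fun j => ⟨hgr j, hD j, hact' j, hinf j, hsup j⟩, ?_⟩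
  rw [DirectSum.isInternal_submodule_iff_iSupIndep_and_iSup_eq_top]
  have hPle : ∀ j : Fin r, P j ≤ N j.succ := fun j => (hsup j) ▸ le_sup_left
  have hcs : ∀ j k : Fin r, j < k → N j.succ ≤ N k.castSucc := by
    intro j k hjk
    apply hmono
    rw [Fin.le_def]
    rw [Fin.lt_def] at hjk
    simp only [Fin.val_succ, Fin.coe_castSucc]
    omega
  constructor
  · -- independence
    rw [iSupIndep_def]
    intro j
    apply Submodule.disjoint_def.mpr
    intro x hxj hxrest
    set Q : Fin r → Submodule K M := fun k => if k = j then ⊥ else P k with hQ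
    have hQle : (⨆ (k) (_ : k ≠ j), P k) ≤ ⨆ k, Q k := by
      refine iSup_le fun k => iSup_le fun hk => ?_
      have hqk : Q k = P k := if_neg hk
      rw [← hqk]
      exact le_iSup Q k
    obtain ⟨f, hfQ, hfsum⟩ := (Submodule.mem_iSup_iff_exists_finsupp Q x).mp (hQle hxrest)
    have hfsum' : ∑ k ∈ f.support, f k = x := hfsum
    have hfj : f j = 0 := by
      have h0 := hfQ j
      simp only [hQ, if_pos rfl, Submodule.mem_bot] at h0
      exact h0
    have hfP : ∀ k : Fin r, k ≠ j → f k ∈ P k := by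
      intro k hk
      have h0 := hfQ k
      simp only [hQ, if_neg hk] at h0
      exact h0
    have hzero : ∀ (n : ℕ) (k : Fin r), r ≤ k.val + n → j < k → f k = 0 := by
      intro n
      induction n with
      | zero =>
          intro k hk _
          exact absurd hk (by have := k.isLt; omega)
      | succ n ih =>
          intro k hk hjk
          by_cases hks : k ∈ f.support
          · have hsum2 : f k + ∑ k' ∈ f.support.erase k, f k' = x := by
              rw [Finset.add_sum_erase _ _ hks]; exact hfsum'
            have hrest : ∑ k' ∈ f.support.erase k, f k' ∈ N k.castSucc := by
              refine Submodule.sum_mem _ fun k' hk' => ?_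
              obtain ⟨hne, _⟩ := Finset.mem_erase.mp hk'
              rcases lt_or_gt_of_ne hne with hlt | hgt
              · by_cases hk'j : k' = j
                · rw [hk'j, hfj]; exact zero_mem _
                · exact hcs k' k hlt (hPle k' (hfP k' hk'j))
              · have hgt' : k < k' := hgt
                have hv := Fin.lt_def.mp hgt'
                have hz : f k' = 0 := ih k' (by omega) (lt_trans hjk hgt')
                rw [hz]; exact zero_mem _
            have hxN : x ∈ N k.castSucc := hcs j k hjk (hPle j hxj)
            have hfkN : f k ∈ N k.castSucc := by
              have heq : f k = x - ∑ k' ∈ f.support.erase k, f k' := by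
                rw [← hsum2]; abel
              rw [heq]
              exact sub_mem hxN hrest
            have hfkP : f k ∈ P k := hfP k (ne_of_gt hjk)
            have hmem : f k ∈ P k ⊓ N k.castSucc := ⟨hfkP, hfkN⟩
            rw [hinf k] at hmem
            exact (Submodule.mem_bot K).mp hmem
          · exact Finsupp.notMem_support_iff.mp hks
    have hxN : x ∈ N j.castSucc := by
      rw [← hfsum']
      refine Submodule.sum_mem _ fun k _ => ?_
      rcases lt_trichotomy k j with hlt | heq | hgt
      · have : f k ∈ P k := hfP k (ne_of_lt hlt)
        have h1 : N k.succ ≤ N j.castSucc := by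
          apply hmono
          rw [Fin.le_def]
          rw [Fin.lt_def] at hlt
          simp only [Fin.val_succ, Fin.coe_castSucc]
          omega
        exact h1 (hPle k this)
      · rw [heq, hfj]; exact zero_mem _
      · rw [hzero r k (by omega) hgt]; exact zero_mem _
    have hmem : x ∈ P j ⊓ N j.castSucc := ⟨hxj, hxN⟩
    rw [hinf j] at hmem
    exact (Submodule.mem_bot K).mp hmem
  · -- supremum is top
    have hN : ∀ k : Fin (r + 1), N k ≤ ⨆ j, P j := by
      intro k
      induction k using Fin.induction with
      | zero => rw [hbot]; exact bot_le
      | succ k ih =>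
          rw [← hsup k]
          exact sup_le (le_iSup P k) ih
    rw [eq_top_iff, ← htop]
    exact hN _
end
end
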